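/- arXiv:math/0403081 — 4 statements merged into one kernel-verified Lean document; each statement's English description precedes it below -/
import Mathlib

section
/- In any recollement situation, there is a short exact sequence of natural transformations 0 → i_*i^!j_! → j_! → j_* → i_*i*j_* → 0, where the middle map is the norm N. -/
open CategoryTheory Limits

universe v u v' u' v'' u''

/-- A recollement situation of abelian categories `A'`, `A`, `A''`. -/
structure Recollement (A' : Type u') (A : Type u) (A'' : Type u'')
    [Category.{v'} A'] [Category.{v} A] [Category.{v''} A'']
    [Abelian A'] [Abelian A] [Abelian A''] where
  /-- the functor `i^* : A → A'` -/
  iStar : A ⥤ A'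
  /-- the functor `i_* : A' → A` -/
  iLower : A' ⥤ A
  /-- the functor `i^! : A → A'` -/
  iShriek : A ⥤ A'
  /-- the functor `j_! : A'' → A` -/
  jShriek : A'' ⥤ A
  /-- the functor `j^* : A → A''` -/
  jStar : A ⥤ A''
  /-- the functor `j_* : A'' → A` -/
  jLower : A'' ⥤ A
  iStar_additive : iStar.Additive
  iLower_additive : iLower.Additive
  iShriek_additive : iShriek.Additive
  jShriek_additive : jShriek.Additive
  jStar_additive : jStar.Additive
  jLower_additive : jLower.Additive
  /-- `j_!` is left adjoint to `j^*` -/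
  adj₁ : jShriek ⊣ jStar
  /-- `j^*` is left adjoint to `j_*` -/
  adj₂ : jStar ⊣ jLower
  /-- `i^*` is left adjoint to `i_*` -/
  adj₃ : iStar ⊣ iLower
  /-- `i_*` is left adjoint to `i^!` -/
  adj₄ : iLower ⊣ iShriek
  /-- the unit `Id → j^* j_!` is an isomorphism -/
  isIso_adj₁_unit : IsIso adj₁.unit
  /-- the counit `j^* j_* → Id` is an isomorphism -/
  isIso_adj₂_counit : IsIso adj₂.counit
  /-- the counit `i^* i_* → Id` is an isomorphism -/
  isIso_adj₃_counit : IsIso adj₃.counit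
  /-- the unit `Id → i^! i_*` is an isomorphism -/
  isIso_adj₄_unit : IsIso adj₄.unit
  iLower_full : iLower.Full
  iLower_faithful : iLower.Faithful
  /-- `i_*` is an embedding onto the full subcategory of objects killed by `j^*` -/
  essImage_iLower : ∀ (X : A), iLower.essImage X ↔ IsZero (jStar.obj X)

attribute [instance] Recollement.iStar_additive Recollement.iLower_additive
  Recollement.iShriek_additive Recollement.jShriek_additive Recollement.jStar_additive
  Recollement.jLower_additive Recollement.isIso_adj₁_unit Recollement.isIso_adj₂_counit
  Recollement.isIso_adj₃_counit Recollement.isIso_adj₄_unit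
  Recollement.iLower_full Recollement.iLower_faithful

variable {A' : Type u'} {A : Type u} {A'' : Type u''}
    [Category.{v'} A'] [Category.{v} A] [Category.{v''} A'']
    [Abelian A'] [Abelian A] [Abelian A'']

namespace Recollement

/-- The norm `N : j_! ⟶ j_*`, whose component at `X` corresponds to the identity of `X`
under `Hom(j_!X, j_*X) ≅ Hom(X, j^*j_*X) ≅ Hom(X, X)`. -/
noncomputable def norm (R : Recollement A' A A'') : R.jShriek ⟶ R.jLower where
  app X := (R.adj₁.homEquiv X (R.jLower.obj X)).symm (inv (R.adj₂.counit.app X))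
  naturality {X Y} f := by
    have h : f ≫ inv (R.adj₂.counit.app Y) =
        inv (R.adj₂.counit.app X) ≫ R.jStar.map (R.jLower.map f) := by
      rw [← cancel_mono (R.adj₂.counit.app Y)]
      have := R.adj₂.counit.naturality f
      simp only [Functor.comp_map, Functor.id_map] at this
      simp [this]
    rw [← Adjunction.homEquiv_naturality_left_symm, h,
      Adjunction.homEquiv_naturality_right_symm]

/-- The intermediate extension `j_!* := Im (N : j_! → j_*)`. -/
noncomputable def jMid (R : Recollement A' A A'') : A'' ⥤ A where
  obj X := image (R.norm.app X)
  map {X Y} f := image.map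
    ((Arrow.homMk _ _ (R.norm.naturality f) :
      Arrow.mk (R.norm.app X) ⟶ Arrow.mk (R.norm.app Y)))
  map_id X := by
    have : (Arrow.homMk _ _ (R.norm.naturality (𝟙 X)) :
        Arrow.mk (R.norm.app X) ⟶ Arrow.mk (R.norm.app X)) = 𝟙 (Arrow.mk (R.norm.app X)) := by
      ext <;> simp
    rw [this, image.map_id]
    rfl
  map_comp {X Y Z} f g := by
    rw [← image.map_comp]
    congr 1
    ext <;> simp

section Aux

variable (R : Recollement A' A A'')

lemma isZero_jStar_iLower (W : A') : IsZero (R.jStar.obj (R.iLower.obj W)) :=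
  (R.essImage_iLower _).mp ⟨W, ⟨Iso.refl _⟩⟩

lemma hom_iLower_jLower_eq_zero {W : A'} {B : A''}
    (f : R.iLower.obj W ⟶ R.jLower.obj B) : f = 0 := by
  have h : (R.adj₂.homEquiv _ _).symm f = 0 :=
    (R.isZero_jStar_iLower W).eq_of_src _ _
  have hf := Equiv.apply_symm_apply (R.adj₂.homEquiv (R.iLower.obj W) B) f
  rw [h, Adjunction.homEquiv_unit, Functor.map_zero, comp_zero] at hf
  exact hf.symm

lemma hom_jShriek_iLower_eq_zero {B : A''} {W : A'}
    (f : R.jShriek.obj B ⟶ R.iLower.obj W) : f = 0 := by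
  have h : R.adj₁.homEquiv _ _ f = 0 :=
    (R.isZero_jStar_iLower W).eq_of_tgt _ _
  have hf := Equiv.symm_apply_apply (R.adj₁.homEquiv B (R.iLower.obj W)) f
  rw [h, Adjunction.homEquiv_counit, Functor.map_zero, zero_comp] at hf
  exact hf.symm

lemma unit_comp_jStar_map_norm (X : A'') :
    R.adj₁.unit.app X ≫ R.jStar.map (R.norm.app X) = inv (R.adj₂.counit.app X) := by
  have h : R.adj₁.homEquiv X (R.jLower.obj X) (R.norm.app X) = inv (R.adj₂.counit.app X) :=
    Equiv.apply_symm_apply _ _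
  rw [Adjunction.homEquiv_unit] at h
  exact h

instance isIso_jStar_map_norm (X : A'') : IsIso (R.jStar.map (R.norm.app X)) := by
  have h := R.unit_comp_jStar_map_norm X
  exact IsIso.of_isIso_fac_left h

lemma mono_adj₄_counit_app (Y : A) : Mono (R.adj₄.counit.app Y) := by
  haveI : R.jStar.PreservesMonomorphisms :=
    Functor.preservesMonomorphisms_of_adjunction R.adj₁
  apply CategoryTheory.Abelian.mono_of_kernel_ι_eq_zero
  set ι := kernel.ι (R.adj₄.counit.app Y) with hι
  have hz : IsZero (R.jStar.obj (kernel (R.adj₄.counit.app Y))) := by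
    have h0 : R.jStar.map ι = 0 :=
      (R.isZero_jStar_iLower (R.iShriek.obj Y)).eq_of_tgt _ _
    exact IsZero.of_mono_eq_zero _ h0
  obtain ⟨K', ⟨e⟩⟩ := (R.essImage_iLower _).mpr hz
  obtain ⟨k₀, hk₀⟩ := R.iLower.map_surjective (e.hom ≫ ι)
  have hIsoCounit : IsIso (R.iShriek.map (R.adj₄.counit.app Y)) := by
    have h2 : R.iShriek.map (R.adj₄.counit.app Y)
        = inv (R.adj₄.unit.app (R.iShriek.obj Y)) :=
      IsIso.eq_inv_of_hom_inv_id (R.adj₄.right_triangle_components Y)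
    rw [h2]
    infer_instance
  have hk : (e.hom ≫ ι) ≫ R.adj₄.counit.app Y = 0 := by
    rw [Category.assoc, hι, kernel.condition, comp_zero]
  have h3 : R.iShriek.map (e.hom ≫ ι) = 0 := by
    have h2 : R.iShriek.map (e.hom ≫ ι) ≫ R.iShriek.map (R.adj₄.counit.app Y) = 0 := by
      rw [← Functor.map_comp, hk, Functor.map_zero]
    rw [← cancel_mono (R.iShriek.map (R.adj₄.counit.app Y)), zero_comp]
    exact h2
  have h5 : k₀ = 0 := by
    have h4 : k₀ ≫ R.adj₄.unit.app (R.iShriek.obj Y) = 0 := by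
      have hnat := R.adj₄.unit.naturality k₀
      rw [Functor.id_map] at hnat
      rw [hnat, Functor.comp_map, hk₀, h3, comp_zero]
    rw [← cancel_mono (R.adj₄.unit.app (R.iShriek.obj Y)), zero_comp]
    exact h4
  calc ι = e.inv ≫ (e.hom ≫ ι) := by rw [← Category.assoc, e.inv_hom_id, Category.id_comp]
  _ = 0 := by rw [← hk₀, h5, Functor.map_zero, comp_zero]

lemma epi_adj₃_unit_app (Z : A) : Epi (R.adj₃.unit.app Z) := by
  haveI : R.jStar.PreservesEpimorphisms :=
    Functor.preservesEpimorphisms_of_adjunction R.adj₂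
  apply CategoryTheory.Abelian.epi_of_cokernel_π_eq_zero
  set π := cokernel.π (R.adj₃.unit.app Z) with hπ
  have hz : IsZero (R.jStar.obj (cokernel (R.adj₃.unit.app Z))) := by
    have h0 : R.jStar.map π = 0 :=
      (R.isZero_jStar_iLower (R.iStar.obj Z)).eq_of_src _ _
    exact IsZero.of_epi_eq_zero _ h0
  obtain ⟨C', ⟨e⟩⟩ := (R.essImage_iLower _).mpr hz
  obtain ⟨c₀, hc₀⟩ := R.iLower.map_surjective (π ≫ e.inv)
  have hIsoUnit : IsIso (R.iStar.map (R.adj₃.unit.app Z)) := by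
    have h2 : R.iStar.map (R.adj₃.unit.app Z)
        = inv (R.adj₃.counit.app (R.iStar.obj Z)) :=
      IsIso.eq_inv_of_inv_hom_id (R.adj₃.left_triangle_components Z)
    rw [h2]
    infer_instance
  have hc : R.adj₃.unit.app Z ≫ (π ≫ e.inv) = 0 := by
    rw [← Category.assoc, hπ, cokernel.condition, zero_comp]
  have h3 : R.iStar.map (π ≫ e.inv) = 0 := by
    have h2 : R.iStar.map (R.adj₃.unit.app Z) ≫ R.iStar.map (π ≫ e.inv) = 0 := by
      rw [← Functor.map_comp, hc, Functor.map_zero]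
    rw [← cancel_epi (R.iStar.map (R.adj₃.unit.app Z)), comp_zero]
    exact h2
  have h5 : c₀ = 0 := by
    have h4 : R.adj₃.counit.app (R.iStar.obj Z) ≫ c₀ = 0 := by
      have hnat := R.adj₃.counit.naturality c₀
      rw [Functor.id_map] at hnat
      rw [← hnat, Functor.comp_map, hc₀, h3, zero_comp]
    rw [← cancel_epi (R.adj₃.counit.app (R.iStar.obj Z)), comp_zero]
    exact h4
  calc π = (π ≫ e.inv) ≫ e.hom := by rw [Category.assoc, e.inv_hom_id, Category.comp_id]
  _ = 0 := by rw [← hc₀, h5, Functor.map_zero, zero_comp]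

lemma norm_w₁ (X : A'') :
    R.adj₄.counit.app (R.jShriek.obj X) ≫ R.norm.app X = 0 :=
  R.hom_iLower_jLower_eq_zero _

lemma norm_w₂ (X : A'') :
    R.norm.app X ≫ R.adj₃.unit.app (R.jLower.obj X) = 0 :=
  R.hom_jShriek_iLower_eq_zero _

lemma norm_kernelFork_isLimit (X : A'') :
    Nonempty (IsLimit (KernelFork.ofι (R.adj₄.counit.app (R.jShriek.obj X))
      (R.norm_w₁ X))) := by
  haveI : R.jStar.PreservesMonomorphisms :=
    Functor.preservesMonomorphisms_of_adjunction R.adj₁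
  haveI := R.mono_adj₄_counit_app (R.jShriek.obj X)
  -- the kernel of the norm is killed by `j^*`
  have hz : IsZero (R.jStar.obj (kernel (R.norm.app X))) := by
    have h0 : R.jStar.map (kernel.ι (R.norm.app X)) = 0 := by
      have h2 : R.jStar.map (kernel.ι (R.norm.app X)) ≫ R.jStar.map (R.norm.app X) = 0 := by
        rw [← Functor.map_comp, kernel.condition, Functor.map_zero]
      rw [← cancel_mono (R.jStar.map (R.norm.app X)), zero_comp]
      exact h2
    exact IsZero.of_mono_eq_zero _ h0
  obtain ⟨K', ⟨e⟩⟩ := (R.essImage_iLower _).mpr hz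
  set k' := R.adj₄.homEquiv K' (R.jShriek.obj X) (e.hom ≫ kernel.ι (R.norm.app X)) with hk'
  have hfac : e.hom ≫ kernel.ι (R.norm.app X)
      = R.iLower.map k' ≫ R.adj₄.counit.app (R.jShriek.obj X) := by
    conv_lhs => rw [← Equiv.symm_apply_apply (R.adj₄.homEquiv K' (R.jShriek.obj X))
      (e.hom ≫ kernel.ι (R.norm.app X))]
    rw [Adjunction.homEquiv_counit]
  have hι : kernel.ι (R.norm.app X)
      = e.inv ≫ R.iLower.map k' ≫ R.adj₄.counit.app (R.jShriek.obj X) := by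
    rw [← hfac, ← Category.assoc, e.inv_hom_id, Category.id_comp]
  exact ⟨KernelFork.IsLimit.ofι _ _
    (fun {W'} g' hg' => kernel.lift (R.norm.app X) g' hg' ≫ e.inv ≫ R.iLower.map k')
    (fun {W'} g' hg' => by
      simp only [Category.assoc]
      rw [← hι, kernel.lift_ι])
    (fun {W'} g' hg' m hm => by
      rw [← cancel_mono (R.adj₄.counit.app (R.jShriek.obj X)), hm]
      simp only [Category.assoc]
      rw [← hι, kernel.lift_ι])⟩

lemma norm_cokernelCofork_isColimit (X : A'') :
    Nonempty (IsColimit (CokernelCofork.ofπ (R.adj₃.unit.app (R.jLower.obj X))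
      (R.norm_w₂ X))) := by
  haveI : R.jStar.PreservesEpimorphisms :=
    Functor.preservesEpimorphisms_of_adjunction R.adj₂
  haveI := R.epi_adj₃_unit_app (R.jLower.obj X)
  have hz : IsZero (R.jStar.obj (cokernel (R.norm.app X))) := by
    have h0 : R.jStar.map (cokernel.π (R.norm.app X)) = 0 := by
      have h2 : R.jStar.map (R.norm.app X) ≫ R.jStar.map (cokernel.π (R.norm.app X)) = 0 := by
        rw [← Functor.map_comp, cokernel.condition, Functor.map_zero]
      rw [← cancel_epi (R.jStar.map (R.norm.app X)), comp_zero]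
      exact h2
    exact IsZero.of_epi_eq_zero _ h0
  obtain ⟨C', ⟨e⟩⟩ := (R.essImage_iLower _).mpr hz
  set c' := (R.adj₃.homEquiv (R.jLower.obj X) C').symm (cokernel.π (R.norm.app X) ≫ e.inv)
    with hc'
  have hfac : cokernel.π (R.norm.app X) ≫ e.inv
      = R.adj₃.unit.app (R.jLower.obj X) ≫ R.iLower.map c' := by
    conv_lhs => rw [← Equiv.apply_symm_apply (R.adj₃.homEquiv (R.jLower.obj X) C')
      (cokernel.π (R.norm.app X) ≫ e.inv)]
    rw [Adjunction.homEquiv_unit]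
  have hπ : cokernel.π (R.norm.app X)
      = (R.adj₃.unit.app (R.jLower.obj X) ≫ R.iLower.map c') ≫ e.hom := by
    rw [← hfac, Category.assoc, e.inv_hom_id, Category.comp_id]
  exact ⟨CokernelCofork.IsColimit.ofπ _ _
    (fun {Z'} g' hg' => R.iLower.map c' ≫ e.hom ≫ cokernel.desc (R.norm.app X) g' hg')
    (fun {Z'} g' hg' => by
      simp only [← Category.assoc]
      rw [← hπ, cokernel.π_desc])
    (fun {Z'} g' hg' m hm => by
      rw [← cancel_epi (R.adj₃.unit.app (R.jLower.obj X)), hm]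
      simp only [← Category.assoc]
      rw [← hπ, cokernel.π_desc])⟩

end Aux

end Recollement

/-- There is a short exact sequence of natural transformations
`0 → i_*i^!j_! → j_! → j_* → i_*i^*j_* → 0` whose middle map is the norm. -/
theorem recollement_norm_four_term_exact (R : Recollement A' A A'') (X : A'') :
    Mono (R.adj₄.counit.app (R.jShriek.obj X)) ∧
    Epi (R.adj₃.unit.app (R.jLower.obj X)) ∧
    (∃ w : R.adj₄.counit.app (R.jShriek.obj X) ≫ R.norm.app X = 0,
      (ShortComplex.mk _ _ w).Exact) ∧
    (∃ w : R.norm.app X ≫ R.adj₃.unit.app (R.jLower.obj X) = 0,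
      (ShortComplex.mk _ _ w).Exact) := by
  refine ⟨R.mono_adj₄_counit_app _, R.epi_adj₃_unit_app _,
    ⟨R.norm_w₁ X, ?_⟩, ⟨R.norm_w₂ X, ?_⟩⟩
  · exact ShortComplex.exact_of_f_is_kernel _ (R.norm_kernelFork_isLimit X).some
  · exact ShortComplex.exact_of_g_is_cokernel _ (R.norm_cokernelCofork_isColimit X).some
end

section
/- In a recollement situation where A has enough projectives, j* ∘ (L_n j_!) = 0 for all n ≥ 1; dually, with enough injectives, j* ∘ (R^n j_*) = 0 for all n ≥ 1. -/
open CategoryTheory Limits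

universe v u v' u' v'' u''

variable {A' : Type u'} {A : Type u} {A'' : Type u''}
    [Category.{v'} A'] [Category.{v} A] [Category.{v''} A'']
    [Abelian A'] [Abelian A] [Abelian A'']

/-- With enough projectives, `j^* ∘ (L_n j_!) = 0` for `n ≥ 1`; dually with enough
injectives, `j^* ∘ (R^n j_*) = 0` for `n ≥ 1`. -/
theorem recollement_jStar_leftDerived_jShriek_isZero (R : Recollement A' A A'') :
    (∀ [EnoughProjectives A] [EnoughProjectives A'] [EnoughProjectives A''],
      ∀ (n : ℕ), 1 ≤ n → ∀ X : A'',
        IsZero (R.jStar.obj ((R.jShriek.leftDerived n).obj X))) ∧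
    (∀ [EnoughInjectives A] [EnoughInjectives A'] [EnoughInjectives A''],
      ∀ (n : ℕ), 1 ≤ n → ∀ X : A'',
        IsZero (R.jStar.obj ((R.jLower.rightDerived n).obj X))) := by
  -- `j^*` is exact: it is a right adjoint (of `j_!`) and a left adjoint (of `j_*`).
  letI : PreservesLimitsOfSize.{0, 0} R.jStar := R.adj₁.rightAdjoint_preservesLimits
  letI : PreservesColimitsOfSize.{0, 0} R.jStar := R.adj₂.leftAdjoint_preservesColimits
  letI : PreservesFiniteLimits R.jStar := ⟨fun _ _ _ => inferInstance⟩
  letI : PreservesFiniteColimits R.jStar := ⟨fun _ _ _ => inferInstance⟩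
  -- the natural isomorphism `j_! ⋙ j^* ≅ 𝟭`
  let e : R.jShriek ⋙ R.jStar ≅ 𝟭 A'' := (asIso R.adj₁.unit).symm
  constructor
  · intro _ _ _ n hn X
    obtain ⟨m, rfl⟩ : ∃ m, n = m + 1 := ⟨n - 1, (Nat.succ_pred_eq_of_pos hn).symm⟩
    let P : ProjectiveResolution X := ProjectiveResolution.of X
    let K : HomologicalComplex A (ComplexShape.down ℕ) :=
      (R.jShriek.mapHomologicalComplex _).obj P.complex
    have hz : IsZero ((P.complex.sc (m + 1)).homology) := by
      rw [← ShortComplex.exact_iff_isZero_homology]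
      exact P.complex_exactAt_succ m
    refine hz.of_iso ?_
    calc R.jStar.obj ((R.jShriek.leftDerived (m + 1)).obj X)
        ≅ R.jStar.obj ((K.sc (m + 1)).homology) :=
          R.jStar.mapIso (P.isoLeftDerivedObj R.jShriek (m + 1))
      _ ≅ ((K.sc (m + 1)).map R.jStar).homology :=
          ((K.sc (m + 1)).mapHomologyIso R.jStar).symm
      _ ≅ ((P.complex.sc (m + 1)).map (𝟭 A'')).homology :=
          ShortComplex.homologyMapIso
            ((ShortComplex.mapNatIso (P.complex.sc (m + 1)) e :
              (P.complex.sc (m + 1)).map (R.jShriek ⋙ R.jStar) ≅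
                (P.complex.sc (m + 1)).map (𝟭 A'')))
      _ ≅ (P.complex.sc (m + 1)).homology := Iso.refl _
  · intro _ _ _ n hn X
    obtain ⟨m, rfl⟩ : ∃ m, n = m + 1 := ⟨n - 1, (Nat.succ_pred_eq_of_pos hn).symm⟩
    let I : InjectiveResolution X := InjectiveResolution.of X
    let K : HomologicalComplex A (ComplexShape.up ℕ) :=
      (R.jLower.mapHomologicalComplex _).obj I.cocomplex
    -- the natural isomorphism `j_* ⋙ j^* ≅ 𝟭`
    let e' : R.jLower ⋙ R.jStar ≅ 𝟭 A'' := asIso R.adj₂.counit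
    have hz : IsZero ((I.cocomplex.sc (m + 1)).homology) := by
      rw [← ShortComplex.exact_iff_isZero_homology]
      exact I.cocomplex_exactAt_succ m
    refine hz.of_iso ?_
    calc R.jStar.obj ((R.jLower.rightDerived (m + 1)).obj X)
        ≅ R.jStar.obj ((K.sc (m + 1)).homology) :=
          R.jStar.mapIso (I.isoRightDerivedObj R.jLower (m + 1))
      _ ≅ ((K.sc (m + 1)).map R.jStar).homology :=
          ((K.sc (m + 1)).mapHomologyIso R.jStar).symm
      _ ≅ ((I.cocomplex.sc (m + 1)).map (𝟭 A'')).homology :=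
          ShortComplex.homologyMapIso
            ((ShortComplex.mapNatIso (I.cocomplex.sc (m + 1)) e' :
              (I.cocomplex.sc (m + 1)).map (R.jLower ⋙ R.jStar) ≅
                (I.cocomplex.sc (m + 1)).map (𝟭 A'')))
      _ ≅ (I.cocomplex.sc (m + 1)).homology := Iso.refl _
end

section
/- In a recollement situation, if A is an object of A with i^!A = 0, then the unit η_A: A → j_*j*A is a monomorphism and its cokernel lies in the essential image of i_*. If moreover A has enough injectives, there is a short exact sequence 0 → A → j_*j*A → i_*(R^1 i^!)A → 0. -/
open CategoryTheory Limits

universe v u v' u' v'' u''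

variable {A' : Type u'} {A : Type u} {A'' : Type u''}
    [Category.{v'} A'] [Category.{v} A] [Category.{v''} A'']
    [Abelian A'] [Abelian A] [Abelian A'']

universe w₁ w₂ w₃ w₄

section AuxiliaryLemmas

open CategoryTheory.Limits CategoryTheory.Abelian

variable {C : Type w₁} [Category.{w₂} C] [Abelian C] {D : Type w₃} [Category.{w₄} D] [Abelian D]

/-- Homology of a short complex computed from a factorization `S.f = p ≫ m`
where `m` is a kernel of `S.g`. -/
noncomputable def ShortComplex.homologyIsoCokernelOfFac {S : ShortComplex C} {Q : C}
    (p : S.X₁ ⟶ Q) (m : Q ⟶ S.X₂) (wm : m ≫ S.g = 0)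
    (hm : IsLimit (KernelFork.ofι m wm)) (hf : S.f = p ≫ m) :
    S.homology ≅ cokernel p := by
  have hmono : Mono m := mono_of_isLimit_fork hm
  have hl : hm.lift (KernelFork.ofι S.f S.zero) = p := by
    rw [← cancel_mono m, ← hf]
    exact hm.fac (KernelFork.ofι S.f S.zero) WalkingParallelPair.zero
  subst hl
  exact (ShortComplex.LeftHomologyData.homologyIso
    { K := Q
      H := cokernel _
      i := m
      π := cokernel.π _
      wi := wm
      hi := hm
      wπ := cokernel.condition _
      hπ := cokernelIsCokernel _ })

/-- Monomorphism from a kernel fork with zero point. -/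
theorem mono_of_isLimit_kernelFork_isZero {P Q : C} {f : P ⟶ Q} {c : KernelFork f}
    (hc : IsLimit c) (hz : IsZero c.pt) : Mono f := by
  apply Preadditive.mono_of_cancel_zero
  intro T g hg
  obtain ⟨l, hl⟩ := KernelFork.IsLimit.lift' hc g hg
  rw [← hl, hz.eq_of_tgt l 0, zero_comp]

/-- The key "acyclicity" statement: if `u : A₀ ⟶ I` is a monomorphism, `F` kills `A₀`,
and `u` extends through a monomorphism `e₀ : A₀ ⟶ G₀` which is a kernel of some `q : G₀ ⟶ G₁`
with `F` killing `G₁`, then `F` sends `cokernel.π u` to an isomorphism. -/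
theorem Recollement.isIso_map_cokernelπ (F : C ⥤ D) [F.Additive]
    [PreservesLimitsOfSize.{0,0} F]
    {A₀ I G₀ G₁ : C} (u : A₀ ⟶ I) [Mono u] (e₀ : A₀ ⟶ G₀) [Mono e₀] (g : I ⟶ G₀)
    (hg : u ≫ g = e₀) (q : G₀ ⟶ G₁) (wq : e₀ ≫ q = 0)
    (he : IsLimit (KernelFork.ofι e₀ wq))
    (hz1 : IsZero (F.obj A₀)) (hz2 : IsZero (F.obj G₁)) :
    IsIso (F.map (cokernel.π u)) := by
  set W := cokernel u
  set w : I ⟶ W := cokernel.π u with hw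
  set V := cokernel e₀
  set πV : G₀ ⟶ V := cokernel.π e₀ with hπV
  -- the induced mono `V ⟶ G₁`
  have hqmV : e₀ ≫ q = 0 := wq
  haveI : Epi w := by rw [hw]; infer_instance
  haveI : Epi πV := by rw [hπV]; infer_instance
  set mV : V ⟶ G₁ := cokernel.desc e₀ q wq with hmV
  have hπmV : πV ≫ mV = q := cokernel.π_desc _ _ _
  have hSe : (ShortComplex.mk e₀ q wq).Exact := ShortComplex.exact_of_f_is_kernel _ he
  have hmVmono : Mono mV := by
    apply Preadditive.mono_of_cancel_zero
    intro T t ht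
    obtain ⟨T', πT, hπT, a, ha⟩ := surjective_up_to_refinements_of_epi πV t
    haveI := hπT
    have haq : a ≫ q = 0 := by
      rw [← hπmV, ← Category.assoc, ← ha, Category.assoc, ht, comp_zero]
    obtain ⟨T'', πT', hπT', z, hz⟩ := hSe.exact_up_to_refinements a haq
    haveI := hπT'
    dsimp at hz
    have : (πT' ≫ πT) ≫ t = 0 := by
      rw [Category.assoc, ha, ← Category.assoc, hz, Category.assoc,
        cokernel.condition, comp_zero]
    rw [← cancel_epi (πT' ≫ πT), this, comp_zero]
  haveI : Mono (F.map mV) := F.map_mono mV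
  have hzV : IsZero (F.obj V) := IsZero.of_mono (F.map mV) hz2
  -- the induced map `h : W ⟶ V`
  have hwh0 : u ≫ g ≫ πV = 0 := by
    rw [← Category.assoc, hg, cokernel.condition]
  set h : W ⟶ V := cokernel.desc u (g ≫ πV) hwh0 with hh
  have hwhcomm : w ≫ h = g ≫ πV := cokernel.π_desc _ _ _
  -- the comparison map between the kernels of `g` and `h`
  have hlam0 : (kernel.ι g ≫ w) ≫ h = 0 := by
    rw [Category.assoc, hwhcomm, ← Category.assoc, kernel.condition, zero_comp]
  set lam : kernel g ⟶ kernel h := kernel.lift h (kernel.ι g ≫ w) hlam0 with hlamdef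
  have hlam : lam ≫ kernel.ι h = kernel.ι g ≫ w := kernel.lift_ι _ _ _
  have hSuw : (ShortComplex.mk u w (cokernel.condition u)).Exact :=
    ShortComplex.exact_of_g_is_cokernel _ (cokernelIsCokernel u)
  have hlam_mono : Mono lam := by
    apply Preadditive.mono_of_cancel_zero
    intro T t ht
    have h1 : (t ≫ kernel.ι g) ≫ w = 0 := by
      rw [Category.assoc, ← hlam, ← Category.assoc, ht, zero_comp]
    obtain ⟨z, hz0⟩ := hSuw.lift' (t ≫ kernel.ι g) h1
    have hz : z ≫ u = t ≫ kernel.ι g := hz0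
    have hze : z ≫ e₀ = 0 := by
      rw [← hg, ← Category.assoc, hz, Category.assoc, kernel.condition, comp_zero]
    have hz0 : z = 0 := by rwa [← cancel_mono e₀, zero_comp]
    have : t ≫ kernel.ι g = 0 := by rw [← hz, hz0, zero_comp]
    rwa [← cancel_mono (kernel.ι g), zero_comp]
  have hlam_epi : Epi lam := by
    rw [epi_iff_surjective_up_to_refinements]
    intro T y
    obtain ⟨T', πT, hπT, a, ha⟩ := surjective_up_to_refinements_of_epi w (y ≫ kernel.ι h)
    haveI := hπT
    have h1 : (a ≫ g) ≫ πV = 0 := by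
      rw [Category.assoc, ← hwhcomm, ← Category.assoc, ← ha, Category.assoc, Category.assoc,
        kernel.condition, comp_zero, comp_zero]
    have hSV : (ShortComplex.mk e₀ πV (cokernel.condition e₀)).Exact :=
      ShortComplex.exact_of_g_is_cokernel _ (cokernelIsCokernel e₀)
    obtain ⟨T'', πT', hπT', z, hz⟩ := hSV.exact_up_to_refinements (a ≫ g) h1
    haveI := hπT'
    dsimp at hz
    have ha' : (πT' ≫ a - z ≫ u) ≫ g = 0 := by
      rw [Preadditive.sub_comp, Category.assoc, Category.assoc, hg, ← hz, sub_self]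
    refine ⟨T'', πT' ≫ πT, epi_comp _ _, kernel.lift g (πT' ≫ a - z ≫ u) ha', ?_⟩
    rw [← cancel_mono (kernel.ι h)]
    calc ((πT' ≫ πT) ≫ y) ≫ kernel.ι h
        = πT' ≫ (πT ≫ y ≫ kernel.ι h) := by simp only [Category.assoc]
      _ = πT' ≫ a ≫ w := by rw [ha]
      _ = (πT' ≫ a - z ≫ u) ≫ w := by
          rw [Preadditive.sub_comp, Category.assoc, Category.assoc, cokernel.condition,
            comp_zero, sub_zero]
      _ = (kernel.lift g (πT' ≫ a - z ≫ u) ha' ≫ kernel.ι g) ≫ w := by rw [kernel.lift_ι]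
      _ = (kernel.lift g (πT' ≫ a - z ≫ u) ha' ≫ lam) ≫ kernel.ι h := by
          rw [Category.assoc, Category.assoc, hlam]
  haveI : IsIso lam := isIso_of_mono_of_epi lam
  -- `F.map w` is a monomorphism
  have hSuwker : IsLimit (KernelFork.ofι u (cokernel.condition u)) := by
    haveI : Mono ((ShortComplex.mk u w (cokernel.condition u)).f) := ‹Mono u›
    exact hSuw.fIsKernel
  have hFu := KernelFork.mapIsLimit _ hSuwker F
  have hFw_mono : Mono (F.map w) := by
    apply Preadditive.mono_of_cancel_zero
    intro T t ht
    obtain ⟨l, hl⟩ := KernelFork.IsLimit.lift' hFu t (by exact ht)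
    rw [← hl, show l = 0 from hz1.eq_of_tgt _ _, zero_comp]
  -- `F.map w` is an epimorphism
  have hFw_epi : Epi (F.map w) := by
    rw [epi_iff_surjective_up_to_refinements]
    intro T y
    have wker : F.map (kernel.ι h) ≫ F.map h = 0 := by
      rw [← F.map_comp, kernel.condition, F.map_zero]
    have hSkk : (ShortComplex.mk (F.map (kernel.ι h)) (F.map h) wker).Exact :=
      ShortComplex.exact_of_f_is_kernel _ (KernelFork.mapIsLimit _ (kernelIsKernel h) F)
    haveI : Mono (F.map (kernel.ι h)) := F.map_mono _
    haveI : Mono ((ShortComplex.mk (F.map (kernel.ι h)) (F.map h) wker).f) :=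
      F.map_mono (kernel.ι h)
    have hy0 : y ≫ F.map h = 0 := hzV.eq_of_tgt _ _
    obtain ⟨x', hx'0⟩ := hSkk.lift' y hy0
    have hx' : x' ≫ F.map (kernel.ι h) = y := hx'0
    haveI : IsIso (F.map lam) := inferInstance
    refine ⟨T, 𝟙 T, inferInstance, x' ≫ inv (F.map lam) ≫ F.map (kernel.ι g), ?_⟩
    rw [Category.id_comp, Category.assoc, Category.assoc, ← F.map_comp, ← hlam,
      F.map_comp, IsIso.inv_hom_id_assoc, hx']
  exact isIso_of_mono_of_epi _

/-- Splitting off the cokernel: given `η : X ⟶ A₀` and `u : A₀ ⟶ I` monomorphisms such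
that `F` inverts `cokernel.π u`, the cokernel of `F (cokernel.π (η ≫ u))` is `F (cokernel η)`. -/
noncomputable def Recollement.cokernelFIso (F : C ⥤ D) [F.Additive]
    [PreservesLimitsOfSize.{0,0} F]
    {X A₀ I : C} (η : X ⟶ A₀) (u : A₀ ⟶ I) [Mono η] [Mono u]
    (hw : IsIso (F.map (cokernel.π u))) :
    cokernel (F.map (cokernel.π (η ≫ u))) ≅ F.obj (cokernel η) := by
  set f : X ⟶ I := η ≫ u with hf
  set Q := cokernel f
  set p : I ⟶ Q := cokernel.π f with hp
  set W := cokernel u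
  set w : I ⟶ W := cokernel.π u with hwdef
  haveI : Epi p := by rw [hp]; infer_instance
  haveI : Epi w := by rw [hwdef]; infer_instance
  have hv0 : η ≫ u ≫ p = 0 := by rw [← Category.assoc, ← hf, cokernel.condition]
  set v : cokernel η ⟶ Q := cokernel.desc η (u ≫ p) hv0 with hv
  have hπv : cokernel.π η ≫ v = u ≫ p := cokernel.π_desc _ _ _
  have hw'0 : f ≫ w = 0 := by rw [hf, Category.assoc, cokernel.condition, comp_zero]
  set w' : Q ⟶ W := cokernel.desc f w hw'0 with hw'
  have hpw' : p ≫ w' = w := cokernel.π_desc _ _ _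
  have hvw' : v ≫ w' = 0 := by
    rw [← cancel_epi (cokernel.π η), ← Category.assoc, hπv, Category.assoc, hpw',
      cokernel.condition, comp_zero]
  have hSfp : (ShortComplex.mk f p (cokernel.condition f)).Exact :=
    ShortComplex.exact_of_g_is_cokernel _ (cokernelIsCokernel f)
  have hSuw : (ShortComplex.mk u w (cokernel.condition u)).Exact :=
    ShortComplex.exact_of_g_is_cokernel _ (cokernelIsCokernel u)
  haveI : Mono ((ShortComplex.mk f p (cokernel.condition f)).f) := mono_comp η u
  haveI : Mono ((ShortComplex.mk u w (cokernel.condition u)).f) := ‹Mono u›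
  haveI hvmono : Mono v := by
    apply Preadditive.mono_of_cancel_zero
    intro T t ht
    obtain ⟨T', πT, hπT, y, hy⟩ := surjective_up_to_refinements_of_epi (cokernel.π η) t
    haveI := hπT
    have h1 : (y ≫ u) ≫ p = 0 := by
      rw [Category.assoc, ← hπv, ← Category.assoc, ← hy, Category.assoc, ht, comp_zero]
    obtain ⟨z, hz0⟩ := hSfp.lift' (y ≫ u) h1
    have hz : z ≫ f = y ≫ u := hz0
    have h2 : (z ≫ η) ≫ u = y ≫ u := by
      rw [Category.assoc, ← hf, hz]
    have h3 : z ≫ η = y := (cancel_mono u).1 h2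
    have h4 : πT ≫ t = 0 := by
      rw [hy, ← h3, Category.assoc, cokernel.condition, comp_zero]
    rw [← cancel_epi πT, h4, comp_zero]
  have hS₂ : (ShortComplex.mk v w' hvw').Exact := by
    rw [ShortComplex.exact_iff_exact_up_to_refinements]
    intro T x₂ hx₂
    dsimp at x₂ hx₂ ⊢
    obtain ⟨T', πT, hπT, y, hy⟩ := surjective_up_to_refinements_of_epi p x₂
    haveI := hπT
    have h1 : y ≫ w = 0 := by
      rw [← hpw', ← Category.assoc, ← hy, Category.assoc, hx₂, comp_zero]
    obtain ⟨z, hz0⟩ := hSuw.lift' y h1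
    have hz : z ≫ u = y := hz0
    refine ⟨T', πT, hπT, z ≫ cokernel.π η, ?_⟩
    rw [hy, Category.assoc, hπv, ← Category.assoc, hz]
  haveI : Mono ((ShortComplex.mk v w' hvw').f) := hvmono
  have hVker : IsLimit (KernelFork.ofι v hvw') := hS₂.fIsKernel
  have hFVker := KernelFork.mapIsLimit _ hVker F
  haveI : Mono (F.map v) := F.map_mono v
  haveI : IsIso (F.map w) := hw
  set r : F.obj Q ⟶ F.obj I := F.map w' ≫ inv (F.map w) with hr
  have hpr : F.map p ≫ r = 𝟙 _ := by
    rw [hr, ← Category.assoc, ← F.map_comp, hpw', IsIso.hom_inv_id]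
  set σ : F.obj Q ⟶ F.obj Q := 𝟙 _ - r ≫ F.map p with hσdef
  have hσ : σ ≫ F.map w' = 0 := by
    rw [hσdef, Preadditive.sub_comp, Category.id_comp, Category.assoc, ← F.map_comp, hpw',
      hr, Category.assoc, IsIso.inv_hom_id, Category.comp_id, sub_self]
  set ρ : F.obj Q ⟶ F.obj (cokernel η) := hFVker.lift (KernelFork.ofι σ hσ) with hρdef
  have hρ : ρ ≫ F.map v = σ := by
    have := hFVker.fac (KernelFork.ofι σ hσ) WalkingParallelPair.zero
    simp at this; exact this
  have hvρ : F.map v ≫ ρ = 𝟙 _ := by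
    have h0 : F.map v ≫ r = 0 := by
      rw [hr, ← Category.assoc, ← F.map_comp, hvw', F.map_zero, zero_comp]
    rw [← cancel_mono (F.map v), Category.assoc, hρ, hσdef, Preadditive.comp_sub,
      Category.comp_id, ← Category.assoc, h0, zero_comp, sub_zero, Category.id_comp]
  have hpρ : F.map p ≫ ρ = 0 := by
    rw [← cancel_mono (F.map v), Category.assoc, hρ, hσdef, Preadditive.comp_sub,
      Category.comp_id, ← Category.assoc, hpr, Category.id_comp, sub_self, zero_comp]
  refine ⟨cokernel.desc (F.map p) ρ hpρ, F.map v ≫ cokernel.π (F.map p), ?_, ?_⟩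
  · rw [← cancel_epi (cokernel.π (F.map p)), Category.comp_id, cokernel.π_desc_assoc,
      ← Category.assoc, hρ, hσdef, Preadditive.sub_comp, Category.id_comp,
      Category.assoc, cokernel.condition, comp_zero, sub_zero]
  · rw [Category.assoc, cokernel.π_desc, hvρ]

end AuxiliaryLemmas

section DerivedFunctorComputation

open CategoryTheory.Limits CategoryTheory.Abelian CategoryTheory.InjectiveResolution

variable {C : Type w₁} [Category.{w₂} C] [Abelian C] {D : Type w₃} [Category.{w₄} D] [Abelian D]

/-- An injective resolution of `X` built from `InjectiveResolution.ofCocomplex`. -/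
noncomputable def Recollement.stdRes [EnoughInjectives C] (X : C) : InjectiveResolution X where
  cocomplex := InjectiveResolution.ofCocomplex X
  ι := (CochainComplex.fromSingle₀Equiv _ _).symm ⟨Injective.ι X,
    by rw [ofCocomplex_d_0_1]; exact (cokernel.condition_assoc _ _).trans zero_comp⟩
  quasiIso := ⟨fun n => by
    cases n
    · rw [CochainComplex.quasiIsoAt₀_iff, ShortComplex.quasiIso_iff_of_zeros]
      · refine (ShortComplex.exact_and_mono_f_iff_of_iso ?_).2
          ⟨exact_f_d (Injective.ι X), by dsimp; infer_instance⟩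
        exact ShortComplex.isoMk (Iso.refl _) (Iso.refl _) (Iso.refl _)
          (by erw [Category.id_comp, Category.comp_id]
              exact (CochainComplex.fromSingle₀Equiv_symm_apply_f_zero
                (C := InjectiveResolution.ofCocomplex X) (Injective.ι X) _).symm)
          (by erw [Category.id_comp, Category.comp_id]; exact (ofCocomplex_d_0_1 X).symm)
      all_goals rfl
    · rw [quasiIsoAt_iff_exactAt]
      · apply ofCocomplex_exactAt_succ
      · apply CochainComplex.exactAt_succ_single_obj⟩

/-- Computation of the first right derived functor of a left exact functor via the
standard resolution: it is the cokernel of `F (I⁰ → Q)` where `Q = cokernel (X ⟶ I⁰)`. -/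
noncomputable def Recollement.rightDerivedOneIso (F : C ⥤ D) [F.Additive]
    [PreservesLimitsOfSize.{0,0} F] [EnoughInjectives C] (X : C) :
    (F.rightDerived 1).obj X ≅ cokernel (F.map (cokernel.π (Injective.ι X))) := by
  set K := InjectiveResolution.ofCocomplex X with hK
  set K' := (F.mapHomologicalComplex (ComplexShape.up ℕ)).obj K with hK'
  have e1 : (F.rightDerived 1).obj X ≅ K'.homology 1 :=
    (Recollement.stdRes X).isoRightDerivedObj F 1
  have e2 : K'.homology 1 ≅ (K'.sc' 0 1 2).homology :=
    ShortComplex.homologyMapIso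
      ((HomologicalComplex.natIsoSc' D (ComplexShape.up ℕ) 0 1 2 (by simp) (by simp)).app K')
  set p : Injective.under X ⟶ cokernel (Injective.ι X) := cokernel.π (Injective.ι X) with hp
  set m : cokernel (Injective.ι X) ⟶ Injective.syzygies (Injective.ι X) :=
    Injective.ι (cokernel (Injective.ι X)) with hm
  have hd01 : K.d 0 1 = p ≫ m := ofCocomplex_d_0_1 X
  have hm12 : m ≫ K.d 1 2 = 0 := by
    exact (cancel_epi p).1 ((Category.assoc p m (K.d 1 2)).symm.trans
      ((congrArg (· ≫ K.d 1 2) hd01).symm.trans ((K.d_comp_d 0 1 2).trans comp_zero.symm)))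
  have hexact : (K.sc' 0 1 2).Exact :=
    (K.exactAt_iff' 0 1 2 (by simp) (by simp)).1 (ofCocomplex_exactAt_succ X 0)
  have hS' : (ShortComplex.mk m (K.d 1 2) hm12).Exact := by
    rw [ShortComplex.exact_iff_exact_up_to_refinements]
    intro T x₂ hx₂
    dsimp at x₂ hx₂ ⊢
    obtain ⟨T', πT, hπT, x₁, hx₁⟩ := hexact.exact_up_to_refinements x₂ (by exact hx₂)
    exact ⟨T', πT, hπT, x₁ ≫ p,
      hx₁.trans ((congrArg (x₁ ≫ ·) hd01).trans (Category.assoc x₁ p m).symm)⟩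
  haveI : Mono ((ShortComplex.mk m (K.d 1 2) hm12).f) := Injective.ι_mono _
  have hker : IsLimit (KernelFork.ofι m hm12) := hS'.fIsKernel
  have hFker := KernelFork.mapIsLimit _ hker F
  have wm' : F.map m ≫ (K'.sc' 0 1 2).g = 0 := by
    show F.map m ≫ F.map (K.d 1 2) = 0
    exact (F.map_comp _ _).symm.trans ((congrArg F.map hm12).trans (F.map_zero _ _))
  have hFker' : IsLimit (KernelFork.ofι (F.map m) wm') := hFker
  have hf' : (K'.sc' 0 1 2).f = F.map p ≫ F.map m := by
    show F.map (K.d 0 1) = F.map p ≫ F.map m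
    exact (congrArg F.map hd01).trans (F.map_comp p m)
  have e3 : (K'.sc' 0 1 2).homology ≅ cokernel (F.map p) :=
    ShortComplex.homologyIsoCokernelOfFac (S := K'.sc' 0 1 2) (F.map p) (F.map m)
      wm' hFker' hf'
  exact e1 ≪≫ e2 ≪≫ e3

end DerivedFunctorComputation

namespace Recollement

open CategoryTheory.Limits CategoryTheory.Abelian

variable {A' : Type u'} {A : Type u} {A'' : Type u''}
    [Category.{v'} A'] [Category.{v} A] [Category.{v''} A'']
    [Abelian A'] [Abelian A] [Abelian A''] (R : Recollement A' A A'')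

theorem hom_ext_iLower_jLower {T : A'} {Y : A''} (φ ψ : R.iLower.obj T ⟶ R.jLower.obj Y) :
    φ = ψ := by
  have hz : IsZero (R.jStar.obj (R.iLower.obj T)) :=
    (R.essImage_iLower _).1 (R.iLower.obj_mem_essImage T)
  apply (R.adj₂.homEquiv _ _).symm.injective
  exact hz.eq_of_src _ _

theorem isZero_iShriek_jLower (Y : A'') : IsZero (R.iShriek.obj (R.jLower.obj Y)) := by
  rw [IsZero.iff_id_eq_zero]
  apply (R.adj₄.homEquiv _ _).symm.injective
  exact R.hom_ext_iLower_jLower _ _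

theorem hom_iLower_eq_zero_of_isZero_iShriek {Z : A} (hZ : IsZero (R.iShriek.obj Z))
    {T : A'} (φ : R.iLower.obj T ⟶ Z) : φ = 0 := by
  apply (R.adj₄.homEquiv _ _).injective
  exact hZ.eq_of_tgt _ _

theorem mono_of_jStar {Z Z' : A} (σ : Z ⟶ Z') (h1 : Mono (R.jStar.map σ))
    (h2 : ∀ (T : A') (φ : R.iLower.obj T ⟶ Z), φ = 0) : Mono σ := by
  letI : PreservesLimitsOfSize.{0,0} R.jStar := R.adj₁.rightAdjoint_preservesLimits
  have hι : R.jStar.map (kernel.ι σ) = 0 := by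
    rw [← cancel_mono (R.jStar.map σ), ← R.jStar.map_comp, kernel.condition,
      R.jStar.map_zero, zero_comp]
  have hlim := KernelFork.mapIsLimit _ (kernelIsKernel σ) R.jStar
  have hzero : IsZero (R.jStar.obj (kernel σ)) := by
    rw [IsZero.iff_id_eq_zero]
    apply Fork.IsLimit.hom_ext hlim
    simp only [KernelFork.map_ι, Fork.ι_ofι, hι, comp_zero, zero_comp]
    exact comp_zero.trans zero_comp.symm
  obtain ⟨T, ⟨e⟩⟩ := (R.essImage_iLower _).2 hzero
  have hι0 : kernel.ι σ = 0 := by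
    have h3 := h2 T (e.hom ≫ kernel.ι σ)
    calc kernel.ι σ = e.inv ≫ (e.hom ≫ kernel.ι σ) := by rw [← Category.assoc,
          e.inv_hom_id, Category.id_comp]
      _ = 0 := by rw [h3, comp_zero]
  exact Abelian.mono_of_kernel_ι_eq_zero _ hι0

theorem isIso_jStar_map_unit (X : A) : IsIso (R.jStar.map (R.adj₂.unit.app X)) := by
  have tri := R.adj₂.left_triangle_components X
  have : R.jStar.map (R.adj₂.unit.app X) = inv (R.adj₂.counit.app (R.jStar.obj X)) := by
    rw [← cancel_mono (R.adj₂.counit.app (R.jStar.obj X)), tri, IsIso.inv_hom_id]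
    exact rfl
  rw [this]
  infer_instance

theorem mono_unit_of_isZero_iShriek (X : A) (hX : IsZero (R.iShriek.obj X)) :
    Mono (R.adj₂.unit.app X) := by
  haveI := R.isIso_jStar_map_unit X
  exact R.mono_of_jStar _ inferInstance
    (fun T φ => R.hom_iLower_eq_zero_of_isZero_iShriek hX φ)

theorem essImage_cokernel_unit (X : A) :
    R.iLower.essImage (cokernel (R.adj₂.unit.app X)) := by
  letI : PreservesColimitsOfSize.{0,0} R.jStar := R.adj₂.leftAdjoint_preservesColimits
  haveI := R.isIso_jStar_map_unit X
  apply (R.essImage_iLower _).2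
  have e : R.jStar.obj (cokernel (R.adj₂.unit.app X)) ≅
      cokernel (R.jStar.map (R.adj₂.unit.app X)) :=
    PreservesCokernel.iso R.jStar _
  refine IsZero.of_iso ?_ e
  exact IsZero.of_iso (isZero_zero _) (cokernel.ofEpi _)

theorem isIso_adj₄_counit_of_essImage {Z : A} (hZ : R.iLower.essImage Z) :
    IsIso (R.adj₄.counit.app Z) := by
  obtain ⟨T, ⟨e⟩⟩ := hZ
  have h1 : IsIso (R.adj₄.counit.app (R.iLower.obj T)) := by
    have tri := R.adj₄.left_triangle_components T
    have : R.adj₄.counit.app (R.iLower.obj T) = inv (R.iLower.map (R.adj₄.unit.app T)) := by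
      rw [← cancel_epi (R.iLower.map (R.adj₄.unit.app T)), tri, IsIso.hom_inv_id]
      exact rfl
    rw [this]; infer_instance
  have nat := R.adj₄.counit.naturality e.hom
  simp only [Functor.comp_map, Functor.id_map] at nat
  have : R.adj₄.counit.app Z =
      inv (R.iLower.map (R.iShriek.map e.hom)) ≫ R.adj₄.counit.app (R.iLower.obj T) ≫ e.hom := by
    rw [← nat, IsIso.inv_hom_id_assoc]
  rw [this]
  infer_instance

end Recollement

/-- If `i^!A = 0` then the unit `η_A : A → j_*j^*A` is mono with cokernel in the
essential image of `i_*`; with enough injectives there is a short exact sequence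
`0 → A → j_*j^*A → i_*(R^1 i^!)A → 0`. -/
theorem recollement_unit_mono_of_iShriek_isZero (R : Recollement A' A A'')
    (X : A) (hX : IsZero (R.iShriek.obj X)) :
    Mono (R.adj₂.unit.app X) ∧
    R.iLower.essImage (cokernel (R.adj₂.unit.app X)) ∧
    (∀ [EnoughInjectives A],
      ∃ (π : R.jLower.obj (R.jStar.obj X) ⟶ R.iLower.obj ((R.iShriek.rightDerived 1).obj X))
        (w : R.adj₂.unit.app X ≫ π = 0),
        (ShortComplex.mk _ _ w).ShortExact) := by
  have hmono : Mono (R.adj₂.unit.app X) := R.mono_unit_of_isZero_iShriek X hX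
  have himg : R.iLower.essImage (cokernel (R.adj₂.unit.app X)) := R.essImage_cokernel_unit X
  refine ⟨hmono, himg, ?_⟩
  intro hEI
  letI : PreservesLimitsOfSize.{0,0} R.iShriek := R.adj₄.rightAdjoint_preservesLimits
  letI : PreservesLimitsOfSize.{0,0} R.jStar := R.adj₁.rightAdjoint_preservesLimits
  letI : PreservesLimitsOfSize.{0,0} R.jLower := R.adj₂.rightAdjoint_preservesLimits
  set η : X ⟶ R.jLower.obj (R.jStar.obj X) := R.adj₂.unit.app X with hη
  haveI : Mono η := hmono
  set f : X ⟶ Injective.under X := Injective.ι X with hfdef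
  set u : R.jLower.obj (R.jStar.obj X) ⟶ Injective.under X := Injective.factorThru f η with hu
  have hηu : η ≫ u = f := Injective.comp_factorThru f η
  haveI humono : Mono u := by
    haveI : Mono (R.jStar.map f) := R.jStar.map_mono f
    haveI : IsIso (R.jStar.map η) := R.isIso_jStar_map_unit X
    have : R.jStar.map u = inv (R.jStar.map η) ≫ R.jStar.map f := by
      rw [IsIso.eq_inv_comp, ← R.jStar.map_comp, hηu]
    haveI : Mono (R.jStar.map u) := by rw [this]; exact mono_comp _ _
    exact R.mono_of_jStar u inferInstance (fun T φ => R.hom_ext_iLower_jLower φ 0)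
  haveI : IsIso (R.adj₂.counit.app (R.jStar.obj X)) := inferInstance
  haveI : Mono (R.jStar.map u) := R.jStar.map_mono u
  set e : R.jStar.obj X ⟶ R.jStar.obj (Injective.under X) :=
    inv (R.adj₂.counit.app (R.jStar.obj X)) ≫ R.jStar.map u with he
  haveI : Mono e := mono_comp _ _
  haveI : Mono (R.jLower.map e) := R.jLower.map_mono e
  -- `u ≫ η_I = j_* e`
  have hg : u ≫ R.adj₂.unit.app (Injective.under X) = R.jLower.map e := by
    have hnat := R.adj₂.unit.naturality u
    simp only [Functor.comp_map, Functor.id_map] at hnat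
    have htri := R.adj₂.right_triangle_components (R.jStar.obj X)
    have hinv : R.adj₂.unit.app (R.jLower.obj (R.jStar.obj X)) =
        inv (R.jLower.map (R.adj₂.counit.app (R.jStar.obj X))) := by
      rw [← cancel_mono (R.jLower.map (R.adj₂.counit.app (R.jStar.obj X))), htri,
        IsIso.inv_hom_id]
      exact rfl
    rw [hnat, hinv, he, R.jLower.map_comp, R.jLower.map_inv]
  -- `j_* e` is a kernel of `j_* (cokernel.π e)`
  have hSae : (ShortComplex.mk e (cokernel.π e) (cokernel.condition e)).Exact :=
    ShortComplex.exact_of_g_is_cokernel _ (cokernelIsCokernel e)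
  haveI : Mono ((ShortComplex.mk e (cokernel.π e) (cokernel.condition e)).f) := ‹Mono e›
  have heker : IsLimit (KernelFork.ofι e (cokernel.condition e)) := hSae.fIsKernel
  have hFeker := KernelFork.mapIsLimit _ heker R.jLower
  have wq : R.jLower.map e ≫ R.jLower.map (cokernel.π e) = 0 := by
    rw [← R.jLower.map_comp, cokernel.condition, R.jLower.map_zero]
  -- key acyclicity
  have hw : IsIso (R.iShriek.map (cokernel.π u)) :=
    Recollement.isIso_map_cokernelπ R.iShriek u (R.jLower.map e)
      (R.adj₂.unit.app (Injective.under X)) hg (R.jLower.map (cokernel.π e)) wq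
      hFeker (R.isZero_iShriek_jLower _) (R.isZero_iShriek_jLower _)
  -- splitting off the cokernel
  have spl : cokernel (R.iShriek.map (cokernel.π (η ≫ u))) ≅ R.iShriek.obj (cokernel η) :=
    Recollement.cokernelFIso R.iShriek η u hw
  rw [hηu] at spl
  have res : (R.iShriek.rightDerived 1).obj X ≅
      cokernel (R.iShriek.map (cokernel.π (Injective.ι X))) :=
    Recollement.rightDerivedOneIso R.iShriek X
  have eC : (R.iShriek.rightDerived 1).obj X ≅ R.iShriek.obj (cokernel η) := res ≪≫ spl
  haveI := R.isIso_adj₄_counit_of_essImage himg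
  set χ : R.iLower.obj ((R.iShriek.rightDerived 1).obj X) ≅ cokernel η :=
    R.iLower.mapIso eC ≪≫ asIso (R.adj₄.counit.app (cokernel η)) with hχ
  refine ⟨cokernel.π η ≫ χ.inv, by rw [← Category.assoc, cokernel.condition, zero_comp], ?_⟩
  have hS0 : (ShortComplex.mk η (cokernel.π η) (cokernel.condition η)).Exact :=
    ShortComplex.exact_of_g_is_cokernel _ (cokernelIsCokernel η)
  have hiso : (ShortComplex.mk η (cokernel.π η) (cokernel.condition η)) ≅
      (ShortComplex.mk η (cokernel.π η ≫ χ.inv)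
        (by rw [← Category.assoc, cokernel.condition, zero_comp])) :=
    ShortComplex.isoMk (Iso.refl _) (Iso.refl _) χ.symm (by simp) (by simp)
  haveI : Epi (cokernel.π η ≫ χ.inv) := epi_comp _ _
  exact
    { exact := (ShortComplex.exact_iff_of_iso hiso).1 hS0
      mono_f := hmono
      epi_g := ‹Epi (cokernel.π η ≫ χ.inv)› }
end

section
/- Every MacPherson–Vilonen recollement A(ξ) with enough projectives is pre-hereditary, i.e., (L_2 i*)(i_*V) = 0 for every projective object V of A'. Consequently, (L_2 i*) ∘ i_* = 0 in any pre-hereditary recollement. -/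
open CategoryTheory Limits
open ZeroObject

set_option linter.unusedSectionVars false

universe v u v' u' v'' u''


universe w₁ w₂ w₃ w₄

namespace PreHered

variable {C : Type w₁} {D : Type w₂} [Category.{w₃} C] [Category.{w₄} D]
  [Abelian C] [Abelian D]

/-- The augmentation of a projective resolution, with target `Z`. -/
noncomputable def π₀ {Z : C} (Q : ProjectiveResolution Z) : Q.complex.X 0 ⟶ Z := Q.π.f 0

lemma d_π₀ {Z : C} (Q : ProjectiveResolution Z) : Q.complex.d 1 0 ≫ π₀ Q = 0 :=
  Q.complex_d_comp_π_f_zero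

lemma exact₀' {Z : C} (Q : ProjectiveResolution Z) :
    (ShortComplex.mk _ (π₀ Q) (d_π₀ Q)).Exact :=
  Q.exact₀

instance {Z : C} (Q : ProjectiveResolution Z) : Epi (π₀ Q) :=
  (inferInstance : Epi (Q.π.f 0))

section Splice

variable {P M : C} (π : P ⟶ M) [Projective P] [Epi π]
  (Q : ProjectiveResolution (kernel π))

/-- Objects for the spliced resolution. -/
noncomputable def spliceX (P : C) (Q : ChainComplex C ℕ) : ℕ → C
  | 0 => P
  | (n+1) => Q.X n

/-- Differentials for the spliced resolution. -/
noncomputable def spliceD : ∀ n : ℕ, spliceX P Q.complex (n+1) ⟶ spliceX P Q.complex n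
  | 0 => show Q.complex.X 0 ⟶ P from (π₀ Q) ≫ kernel.ι π
  | (n+1) => show Q.complex.X (n+1) ⟶ Q.complex.X n from Q.complex.d (n+1) n

/-- The spliced chain complex. -/
noncomputable def spliceComplex : ChainComplex C ℕ :=
  ChainComplex.of (spliceX P Q.complex) (spliceD π Q) (by
    rintro (_|n)
    · show Q.complex.d 1 0 ≫ ((π₀ Q) ≫ kernel.ι π) = 0
      rw [← Category.assoc, (d_π₀ Q), zero_comp]
    · show Q.complex.d (n+2) (n+1) ≫ Q.complex.d (n+1) n = 0
      exact Q.complex.d_comp_d _ _ _)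

attribute [reducible] spliceX spliceComplex

instance spliceComplex_projective (n : ℕ) : Projective ((spliceComplex π Q).X n) := by
  obtain (_|n) := n
  · exact (inferInstance : Projective P)
  · exact (inferInstance : Projective (Q.complex.X n))

lemma spliceComplex_d_one_zero :
    (spliceComplex π Q).d 1 0 = (π₀ Q) ≫ kernel.ι π := by
  unfold spliceComplex
  exact ChainComplex.of_d (spliceX P Q.complex) (spliceD π Q) 0

lemma spliceComplex_d_succ (n : ℕ) :
    (spliceComplex π Q).d (n+2) (n+1) = Q.complex.d (n+1) n := by
  unfold spliceComplex
  exact ChainComplex.of_d (spliceX P Q.complex) (spliceD π Q) (n+1)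

lemma spliceComplex_exactAt_succ (n : ℕ) : (spliceComplex π Q).ExactAt (n+1) := by
  rw [HomologicalComplex.exactAt_iff' _ (n+2) (n+1) n (by simp) (by simp)]
  cases n with
  | zero =>
      have h0 : (ShortComplex.mk (Q.complex.d 1 0)
          (π₀ Q) (d_π₀ Q)).Exact := (exact₀' Q)
      let α : ShortComplex.mk (Q.complex.d 1 0)
            (π₀ Q) (d_π₀ Q) ⟶
          (spliceComplex π Q).sc' 2 1 0 :=
        { τ₁ := 𝟙 _
          τ₂ := 𝟙 _
          τ₃ := kernel.ι π
          comm₁₂ := by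
            show 𝟙 _ ≫ (spliceComplex π Q).d 2 1 = Q.complex.d 1 0 ≫ 𝟙 _
            rw [spliceComplex_d_succ π Q 0, Category.comp_id, Category.id_comp]
          comm₂₃ := by
            show 𝟙 _ ≫ (spliceComplex π Q).d 1 0 = (π₀ Q) ≫ kernel.ι π
            rw [spliceComplex_d_one_zero, Category.id_comp] }
      haveI : Epi α.τ₁ := by dsimp [α]; exact inferInstanceAs (Epi (𝟙 _))
      haveI : IsIso α.τ₂ := by dsimp [α]; exact inferInstanceAs (IsIso (𝟙 _))
      haveI : Mono α.τ₃ := by dsimp [α]; exact inferInstanceAs (Mono (kernel.ι π))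
      exact (ShortComplex.exact_iff_of_epi_of_isIso_of_mono α).1 h0
  | succ m =>
      have h0 := Q.exact_succ m
      let α : ShortComplex.mk _ _ (Q.complex.d_comp_d (m + 2) (m + 1) m) ⟶
          (spliceComplex π Q).sc' (m+3) (m+2) (m+1) :=
        { τ₁ := 𝟙 _
          τ₂ := 𝟙 _
          τ₃ := 𝟙 _
          comm₁₂ := by
            show 𝟙 _ ≫ (spliceComplex π Q).d (m+3) (m+2) = Q.complex.d (m+2) (m+1) ≫ 𝟙 _
            rw [spliceComplex_d_succ π Q (m+1), Category.comp_id, Category.id_comp]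
          comm₂₃ := by
            show 𝟙 _ ≫ (spliceComplex π Q).d (m+2) (m+1) = Q.complex.d (m+1) m ≫ 𝟙 _
            rw [spliceComplex_d_succ π Q m, Category.comp_id, Category.id_comp] }
      haveI : Epi α.τ₁ := by dsimp [α]; exact inferInstanceAs (Epi (𝟙 _))
      haveI : IsIso α.τ₂ := by dsimp [α]; exact inferInstanceAs (IsIso (𝟙 _))
      haveI : Mono α.τ₃ := by dsimp [α]; exact inferInstanceAs (Mono (𝟙 _))
      exact (ShortComplex.exact_iff_of_epi_of_isIso_of_mono α).1 h0

/-- The spliced projective resolution of `M` from one of `kernel π`. -/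
noncomputable def splice : ProjectiveResolution M where
  complex := spliceComplex π Q
  projective := inferInstance
  π := (ChainComplex.toSingle₀Equiv _ _).symm ⟨π, by
        rw [spliceComplex_d_one_zero, Category.assoc, kernel.condition, comp_zero]⟩
  quasiIso := ⟨fun n => by
    cases n with
    | zero =>
        rw [ChainComplex.quasiIsoAt₀_iff, ShortComplex.quasiIso_iff_of_zeros']
        · have hw : (spliceComplex π Q).d 1 0 ≫ π = 0 := by
            rw [spliceComplex_d_one_zero, Category.assoc, kernel.condition, comp_zero]
          have hexact : (ShortComplex.mk ((spliceComplex π Q).d 1 0) π hw).Exact := by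
            have hker : (ShortComplex.mk (kernel.ι π) π (kernel.condition π)).Exact :=
              ShortComplex.exact_of_f_is_kernel _ (kernelIsKernel π)
            let α : ShortComplex.mk ((spliceComplex π Q).d 1 0) π hw ⟶
                ShortComplex.mk (kernel.ι π) π (kernel.condition π) :=
              { τ₁ := (π₀ Q)
                τ₂ := 𝟙 _
                τ₃ := 𝟙 _
                comm₁₂ := by
                  show π₀ Q ≫ kernel.ι π = (spliceComplex π Q).d 1 0 ≫ 𝟙 _
                  rw [spliceComplex_d_one_zero, Category.comp_id]
                comm₂₃ := by simp }
            haveI : Epi α.τ₁ := by dsimp [α]; infer_instance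
            haveI : IsIso α.τ₂ := by dsimp [α]; infer_instance
            haveI : Mono α.τ₃ := by dsimp [α]; infer_instance
            exact (ShortComplex.exact_iff_of_epi_of_isIso_of_mono α).2 hker
        
          refine (ShortComplex.exact_and_epi_g_iff_of_iso ?_).2 ⟨hexact, inferInstance⟩
          exact ShortComplex.isoMk (Iso.refl _) (Iso.refl _) (Iso.refl _)
            (by exact (Category.id_comp _).trans (Category.comp_id _).symm) (by simp [ChainComplex.toSingle₀Equiv]; exact (Category.id_comp _).trans (Category.comp_id _).symm)
        · rfl
        · rfl
        · rfl
    | succ n =>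
        rw [quasiIsoAt_iff_exactAt' _ _ (ChainComplex.exactAt_succ_single_obj _ _)]
        exact spliceComplex_exactAt_succ π Q n⟩

@[simp] lemma splice_complex_X_succ (n : ℕ) :
    (splice π Q).complex.X (n+1) = Q.complex.X n := rfl

end Splice

end PreHered

namespace PreHered

variable {C : Type w₁} {D : Type w₂} [Category.{w₃} C] [Category.{w₄} D]
  [Abelian C] [Abelian D]

section Derived

variable (T : C ⥤ D) [T.Additive]

lemma isZero_leftDerived_obj_iff [EnoughProjectives C] {M : C}
    (R : ProjectiveResolution M) (n : ℕ) :
    IsZero ((T.leftDerived n).obj M) ↔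
      ((T.mapHomologicalComplex (ComplexShape.down ℕ)).obj R.complex).ExactAt n := by
  rw [HomologicalComplex.exactAt_iff_isZero_homology]
  constructor
  · intro h; exact IsZero.of_iso h (R.isoLeftDerivedObj T n).symm
  · intro h; exact IsZero.of_iso h (R.isoLeftDerivedObj T n)

lemma isZero_leftDerived_succ_iff [EnoughProjectives C] {P M : C} (π : P ⟶ M)
    [Projective P] [Epi π] (n : ℕ) :
    IsZero ((T.leftDerived (n+2)).obj M) ↔ IsZero ((T.leftDerived (n+1)).obj (kernel π)) := by
  set Q := ProjectiveResolution.of (kernel π) with hQ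
  rw [isZero_leftDerived_obj_iff T (splice π Q) (n+2), isZero_leftDerived_obj_iff T Q (n+1),
    HomologicalComplex.exactAt_iff' _ (n+3) (n+2) (n+1) (by simp) (by simp),
    HomologicalComplex.exactAt_iff' _ (n+2) (n+1) n (by simp) (by simp)]
  refine ShortComplex.exact_iff_of_iso
    (ShortComplex.isoMk (Iso.refl _) (Iso.refl _) (Iso.refl _) ?_ ?_)
  · show 𝟙 _ ≫ T.map (Q.complex.d (n+2) (n+1)) =
      T.map ((spliceComplex π Q).d (n+3) (n+2)) ≫ 𝟙 _
    rw [spliceComplex_d_succ, Category.comp_id, Category.id_comp]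
  · show 𝟙 _ ≫ T.map (Q.complex.d (n+1) n) =
      T.map ((spliceComplex π Q).d (n+2) (n+1)) ≫ 𝟙 _
    rw [spliceComplex_d_succ, Category.comp_id, Category.id_comp]

end Derived

end PreHered

namespace PreHered

open CategoryTheory.Abelian

attribute [local instance] Pseudoelement.homToFun Pseudoelement.setoid

open CategoryTheory.Abelian.Pseudoelement

variable {C : Type w₁} {D : Type w₂} [Category.{w₃} C] [Category.{w₄} D]
  [Abelian C] [Abelian D]

section RightExact

variable (T : C ⥤ D) [T.PreservesZeroMorphisms] [PreservesFiniteColimits T]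

/-- A right exact functor preserves exactness of right-exact sequences. -/
lemma map_exact_of_epi (S : ShortComplex C) (hS : S.Exact) (hg : Epi S.g) :
    (S.map T).Exact := by
  haveI := hg
  exact ShortComplex.Exact.map_of_epi_of_preservesCokernel hS T hg inferInstance

/-- An additive right exact functor preserves epimorphisms. -/
lemma map_epi {X Y : C} (f : X ⟶ Y) (hf : Epi f) : Epi (T.map f) := by
  haveI := hf
  infer_instance

lemma isZero_cokernel_of_epi' {X Y : C} (f : X ⟶ Y) [Epi f] : IsZero (cokernel f) := by
  rw [IsZero.iff_id_eq_zero]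
  apply (cancel_epi (cokernel.π f)).1
  simp [cokernel.π_of_epi]

lemma isZero_cokernel_of_isZero_tgt {X Y : C} (f : X ⟶ Y) (hY : IsZero Y) :
    IsZero (cokernel f) := by
  rw [IsZero.iff_id_eq_zero]
  apply (cancel_epi (cokernel.π f)).1
  rw [hY.eq_of_src (cokernel.π f) 0]
  simp

lemma isZero_obj_zero_of_preservesFiniteLimits (E : C ⥤ D) [PreservesFiniteLimits E] :
    IsZero (E.obj (0 : C)) := by
  have ht : IsTerminal (E.obj (0 : C)) :=
    IsTerminal.isTerminalObj E 0 (isZero_zero C).isTerminal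
  rw [IsZero.iff_id_eq_zero]
  exact ht.hom_ext _ _

/-- Transport of left derived functors along a natural isomorphism. -/
noncomputable def leftDerivedMapIso [EnoughProjectives C] {T T' : C ⥤ D}
    [T.Additive] [T'.Additive] (e : T ≅ T') (n : ℕ) :
    T.leftDerived n ≅ T'.leftDerived n where
  hom := NatTrans.leftDerived e.hom n
  inv := NatTrans.leftDerived e.inv n
  hom_inv_id := by rw [← NatTrans.leftDerived_comp, e.hom_inv_id, NatTrans.leftDerived_id]
  inv_hom_id := by rw [← NatTrans.leftDerived_comp, e.inv_hom_id, NatTrans.leftDerived_id]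

end RightExact

section AL

/-- The key abelian-category lemma: given an exact sequence `A ⟶ B ⟶ K` with
`B ⟶ K` epi, and `m : K ⟶ P`, the complex `A ⟶ B ⟶ P` (with second map the composite)
is exact iff `m` is mono. -/
lemma exact_comp_mono_iff {A B K P' : D} (u : A ⟶ B) (p : B ⟶ K) (m : K ⟶ P')
    (hup : u ≫ p = 0) (hE : (ShortComplex.mk u p hup).Exact) (hp : Epi p)
    (w : u ≫ (p ≫ m) = 0) :
    (ShortComplex.mk u (p ≫ m) w).Exact ↔ Mono m := by
  constructor
  · intro hEx
    apply Pseudoelement.mono_of_zero_of_map_zero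
    intro k hk
    obtain ⟨b, hb⟩ := Pseudoelement.pseudo_surjective_of_epi p k
    have hbm : (p ≫ m) b = 0 := by
      rw [Pseudoelement.comp_apply, hb, hk]
    obtain ⟨a, ha⟩ := Pseudoelement.pseudo_exact_of_exact hEx b hbm
    calc k = Pseudoelement.pseudoApply p b := hb.symm
      _ = Pseudoelement.pseudoApply p (Pseudoelement.pseudoApply u a) := by rw [ha]
      _ = Pseudoelement.pseudoApply (u ≫ p) a := (Pseudoelement.comp_apply _ _ _).symm
      _ = Pseudoelement.pseudoApply (0 : A ⟶ K) a := by rw [hup]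
      _ = 0 := Pseudoelement.zero_apply _ _
  · intro hm
    haveI := hm
    apply Pseudoelement.exact_of_pseudo_exact
    intro b hb
    have hpb : m (p b) = 0 := by
      rw [← Pseudoelement.comp_apply]; exact hb
    have : p b = 0 := Pseudoelement.zero_of_map_zero _
      (Pseudoelement.pseudo_injective_of_mono m) _ hpb
    exact Pseudoelement.pseudo_exact_of_exact hE b this

end AL

end PreHered

namespace PreHered

variable {C : Type w₁} {D : Type w₂} [Category.{w₃} C] [Category.{w₄} D]
  [Abelian C] [Abelian D]

lemma isZero_leftDerived_one_iff_mono [EnoughProjectives C] (T : C ⥤ D) [T.Additive]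
    [PreservesFiniteColimits T] {P M : C} (π : P ⟶ M) [Projective P] [Epi π] :
    IsZero ((T.leftDerived 1).obj M) ↔ Mono (T.map (kernel.ι π)) := by
  set Q := ProjectiveResolution.of (kernel π) with hQ
  rw [isZero_leftDerived_obj_iff T (splice π Q) 1,
    HomologicalComplex.exactAt_iff' _ 2 1 0 (by simp) (by simp)]
  have hup : T.map (Q.complex.d 1 0) ≫ T.map (π₀ Q) = 0 := by
    rw [← T.map_comp, (d_π₀ Q), T.map_zero]
  have hE : (ShortComplex.mk (T.map (Q.complex.d 1 0))
      (T.map (π₀ Q)) hup).Exact := by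
    have := map_exact_of_epi T (ShortComplex.mk (Q.complex.d 1 0)
      (π₀ Q) (d_π₀ Q)) (exact₀' Q) inferInstance
    exact this
  have hp : Epi (T.map (π₀ Q)) := map_epi T _ inferInstance
  have w : T.map (Q.complex.d 1 0) ≫
      (T.map (π₀ Q) ≫ T.map (kernel.ι π)) = 0 := by
    rw [← Category.assoc, hup, zero_comp]
  rw [← exact_comp_mono_iff (T.map (Q.complex.d 1 0))
    (T.map (π₀ Q)) (T.map (kernel.ι π)) hup hE hp w]
  refine ShortComplex.exact_iff_of_iso
    (ShortComplex.isoMk (Iso.refl _) (Iso.refl _) (Iso.refl _) ?_ ?_)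
  · show 𝟙 _ ≫ T.map (Q.complex.d 1 0) = T.map ((spliceComplex π Q).d 2 1) ≫ 𝟙 _
    rw [spliceComplex_d_succ π Q 0, Category.comp_id, Category.id_comp]
  · show 𝟙 _ ≫ (T.map (π₀ Q) ≫ T.map (kernel.ι π)) =
      T.map ((spliceComplex π Q).d 1 0) ≫ 𝟙 _
    rw [spliceComplex_d_one_zero, T.map_comp, Category.comp_id, Category.id_comp]

end PreHered

namespace PreHered

open CategoryTheory.Abelian CategoryTheory.Abelian.Pseudoelement

attribute [local instance] Pseudoelement.homToFun Pseudoelement.setoid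

variable {C : Type w₁} {D : Type w₂} [Category.{w₃} C] [Category.{w₄} D]
  [Abelian C] [Abelian D]

lemma exact_kernel_ι {X Y : C} (f : X ⟶ Y) :
    (ShortComplex.mk (kernel.ι f) f (kernel.condition f)).Exact :=
  ShortComplex.exact_of_f_is_kernel _ (kernelIsKernel f)

section Tools

variable [EnoughProjectives C] (T : C ⥤ D) [T.Additive] [PreservesFiniteColimits T]

/-- Lemma C': if `L₁T` vanishes on the cokernel of a mono `f`, then `T` preserves the
mono `f`. -/
lemma mono_map_of_isZero {X Y : C} (f : X ⟶ Y) [Mono f]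
    (h : IsZero ((T.leftDerived 1).obj (cokernel f))) : Mono (T.map f) := by
  set ρ := Projective.π Y with hρ
  set g := cokernel.π f with hg
  set ρc := ρ ≫ g with hρc
  haveI : Epi ρc := epi_comp _ _
  -- the two kernels
  set ιZ := kernel.ι ρc with hιZ
  set ιY := kernel.ι ρ with hιY
  have hj0 : ιY ≫ ρc = 0 := by rw [hρc, ← Category.assoc, kernel.condition, zero_comp]
  set j : kernel ρ ⟶ kernel ρc := kernel.lift ρc ιY hj0 with hj
  have hjι : j ≫ ιZ = ιY := kernel.lift_ι _ _ _
  have hk0 : (ιZ ≫ ρ) ≫ g = 0 := by rw [Category.assoc, ← hρc, kernel.condition]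
  set k : kernel ρc ⟶ X := Abelian.monoLift f (ιZ ≫ ρ) hk0 with hk
  have hkf : k ≫ f = ιZ ≫ ρ := Abelian.monoLift_comp _ _ _
  have hjk : j ≫ k = 0 := by
    rw [← cancel_mono f, Category.assoc, hkf, ← Category.assoc, hjι, kernel.condition, zero_comp]
  -- k is epi
  have hkepi : Epi k := by
    apply Pseudoelement.epi_of_pseudo_surjective
    intro x'
    obtain ⟨p, hp⟩ := Pseudoelement.pseudo_surjective_of_epi ρ (Pseudoelement.pseudoApply f x')
    have hpz : Pseudoelement.pseudoApply ρc p = 0 := by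
      rw [hρc, Pseudoelement.comp_apply, hp, ← Pseudoelement.comp_apply, cokernel.condition,
        Pseudoelement.zero_apply]
    obtain ⟨z, hz⟩ := Pseudoelement.pseudo_exact_of_exact (exact_kernel_ι ρc) p hpz
    refine ⟨z, Pseudoelement.pseudo_injective_of_mono f ?_⟩
    rw [← Pseudoelement.comp_apply, hkf, Pseudoelement.comp_apply, hz, hp]
  -- exactness of (j, k)
  have hexjk : (ShortComplex.mk j k hjk).Exact := by
    apply Pseudoelement.exact_of_pseudo_exact
    intro z hz
    have h1 : Pseudoelement.pseudoApply ρ (Pseudoelement.pseudoApply ιZ z) = 0 := by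
      rw [← Pseudoelement.comp_apply, ← hkf, Pseudoelement.comp_apply, hz,
        Pseudoelement.apply_zero]
    obtain ⟨y, hy⟩ := Pseudoelement.pseudo_exact_of_exact (exact_kernel_ι ρ) _ h1
    refine ⟨y, Pseudoelement.pseudo_injective_of_mono ιZ ?_⟩
    rw [← Pseudoelement.comp_apply, hjι, hy]
  -- T applied
  haveI hmonoTιZ : Mono (T.map ιZ) := (isZero_leftDerived_one_iff_mono T ρc).1 h
  have hTjk : (ShortComplex.mk (T.map j) (T.map k)
      (by rw [← T.map_comp, hjk, T.map_zero])).Exact := by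
    have := map_exact_of_epi T (ShortComplex.mk j k hjk) hexjk hkepi
    exact this
  have hTkepi : Epi (T.map k) := map_epi T k hkepi
  have hTρexact : (ShortComplex.mk (T.map ιY) (T.map ρ)
      (by rw [← T.map_comp, kernel.condition, T.map_zero])).Exact := by
    have := map_exact_of_epi T (ShortComplex.mk ιY ρ (kernel.condition ρ))
      (exact_kernel_ι ρ) inferInstance
    exact this
  -- the chase
  apply Pseudoelement.mono_of_zero_of_map_zero
  intro x hx
  obtain ⟨z, hzx⟩ := Pseudoelement.pseudo_surjective_of_epi (T.map k) x
  have hp : Pseudoelement.pseudoApply (T.map ρ) (Pseudoelement.pseudoApply (T.map ιZ) z) = 0 := by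
    rw [← Pseudoelement.comp_apply, ← T.map_comp, ← hkf, T.map_comp, Pseudoelement.comp_apply,
      hzx, hx]
  obtain ⟨y, hy⟩ := Pseudoelement.pseudo_exact_of_exact hTρexact _ hp
  have heq : Pseudoelement.pseudoApply (T.map ιZ) z =
      Pseudoelement.pseudoApply (T.map ιZ) (Pseudoelement.pseudoApply (T.map j) y) := by
    rw [← Pseudoelement.comp_apply, ← T.map_comp, hjι, hy]
  obtain ⟨w, hw0, hwprop⟩ := Pseudoelement.sub_of_eq_image (T.map ιZ) z
    (Pseudoelement.pseudoApply (T.map j) y) heq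
  have hwz : w = 0 := Pseudoelement.zero_of_map_zero _
    (Pseudoelement.pseudo_injective_of_mono (T.map ιZ)) _ hw0
  have hTkj : Pseudoelement.pseudoApply (T.map k)
      (Pseudoelement.pseudoApply (T.map j) y) = 0 := by
    rw [← Pseudoelement.comp_apply, ← T.map_comp, hjk, T.map_zero, Pseudoelement.zero_apply]
  have := hwprop _ (T.map k) hTkj
  rw [hwz, Pseudoelement.apply_zero] at this
  rw [← hzx, ← this]

/-- Lemma B: vanishing of `L₁T` is closed under extensions. -/
lemma isZero_leftDerived_one_of_shortExact {A B Cc : C} (f : A ⟶ B) (g : B ⟶ Cc)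
    [Mono f] [Epi g] (hfg : f ≫ g = 0) (hE : (ShortComplex.mk f g hfg).Exact)
    (hA : IsZero ((T.leftDerived 1).obj A)) (hC : IsZero ((T.leftDerived 1).obj Cc)) :
    IsZero ((T.leftDerived 1).obj B) := by
  set ρ := Projective.π B with hρ
  set ρ' := ρ ≫ g with hρ'
  haveI : Epi ρ' := epi_comp _ _
  have hj0 : kernel.ι ρ ≫ ρ' = 0 := by
    rw [hρ', ← Category.assoc, kernel.condition, zero_comp]
  set j : kernel ρ ⟶ kernel ρ' := kernel.lift ρ' (kernel.ι ρ) hj0 with hj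
  have hjι : j ≫ kernel.ι ρ' = kernel.ι ρ := kernel.lift_ι _ _ _
  haveI hjmono : Mono j := by
    have : Mono (j ≫ kernel.ι ρ') := by rw [hjι]; infer_instance
    exact mono_of_mono j (kernel.ι ρ')
  have hk0 : (kernel.ι ρ' ≫ ρ) ≫ g = 0 := by rw [Category.assoc, ← hρ', kernel.condition]
  set k : kernel ρ' ⟶ A := hE.lift (kernel.ι ρ' ≫ ρ) hk0 with hk
  have hkf : k ≫ f = kernel.ι ρ' ≫ ρ := hE.lift_f _ _
  have hjk : j ≫ k = 0 := by
    rw [← cancel_mono f, Category.assoc, hkf, ← Category.assoc, hjι, kernel.condition, zero_comp]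
  have hkepi : Epi k := by
    apply Pseudoelement.epi_of_pseudo_surjective
    intro a
    obtain ⟨p, hp⟩ := Pseudoelement.pseudo_surjective_of_epi ρ (Pseudoelement.pseudoApply f a)
    have hpz : Pseudoelement.pseudoApply ρ' p = 0 := by
      rw [hρ', Pseudoelement.comp_apply, hp, ← Pseudoelement.comp_apply, hfg,
        Pseudoelement.zero_apply]
    obtain ⟨z, hz⟩ := Pseudoelement.pseudo_exact_of_exact (exact_kernel_ι ρ') p hpz
    refine ⟨z, Pseudoelement.pseudo_injective_of_mono f ?_⟩
    rw [← Pseudoelement.comp_apply, hkf, Pseudoelement.comp_apply, hz, hp]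
  have hexjk : (ShortComplex.mk j k hjk).Exact := by
    apply Pseudoelement.exact_of_pseudo_exact
    intro z hz
    have h1 : Pseudoelement.pseudoApply ρ (Pseudoelement.pseudoApply (kernel.ι ρ') z) = 0 := by
      rw [← Pseudoelement.comp_apply, ← hkf, Pseudoelement.comp_apply, hz,
        Pseudoelement.apply_zero]
    obtain ⟨y, hy⟩ := Pseudoelement.pseudo_exact_of_exact (exact_kernel_ι ρ) _ h1
    refine ⟨y, Pseudoelement.pseudo_injective_of_mono (kernel.ι ρ') ?_⟩
    rw [← Pseudoelement.comp_apply, hjι, hy]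
  -- cokernel j ≅ A
  haveI := hkepi
  have hco : IsColimit (CokernelCofork.ofπ k hjk) := hexjk.gIsCokernel
  have e : cokernel j ≅ A := IsColimit.coconePointUniqueUpToIso (cokernelIsCokernel j) hco
  have hcoker0 : IsZero ((T.leftDerived 1).obj (cokernel j)) :=
    IsZero.of_iso hA ((T.leftDerived 1).mapIso e)
  haveI hTj : Mono (T.map j) := mono_map_of_isZero T j hcoker0
  haveI hTιρ' : Mono (T.map (kernel.ι ρ')) := (isZero_leftDerived_one_iff_mono T ρ').1 hC
  have hTιρ : Mono (T.map (kernel.ι ρ)) := by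
    rw [← hjι, T.map_comp]
    exact mono_comp _ _
  exact (isZero_leftDerived_one_iff_mono T ρ).2 hTιρ

end Tools

end PreHered


variable {A' : Type u'} {A : Type u} {A'' : Type u''}
    [Category.{v'} A'] [Category.{v} A] [Category.{v''} A'']
    [Abelian A'] [Abelian A] [Abelian A'']

section MacPhersonVilonen

variable (F G : A'' ⥤ A') (ξ : F ⟶ G)

/-- Objects of the MacPherson–Vilonen category `A(ξ)` attached to a natural
transformation `ξ : F ⟶ G`: tuples `(X, V, α : FX → V, β : V → GX)` with
`β ∘ α = ξ_X`. -/
structure MVObj where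
  pt : A''
  vec : A'
  α : F.obj pt ⟶ vec
  β : vec ⟶ G.obj pt
  w : α ≫ β = ξ.app pt

/-- Morphisms in the MacPherson–Vilonen category `A(ξ)`. -/
@[ext]
structure MVHom (o₁ o₂ : MVObj F G ξ) where
  f : o₁.pt ⟶ o₂.pt
  φ : o₁.vec ⟶ o₂.vec
  w₁ : o₁.α ≫ φ = F.map f ≫ o₂.α
  w₂ : φ ≫ o₂.β = o₁.β ≫ G.map f

instance : Category (MVObj F G ξ) where
  Hom := MVHom F G ξ
  id o := ⟨𝟙 o.pt, 𝟙 o.vec, by simp, by simp⟩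
  comp {o₁ o₂ o₃} g h :=
    ⟨g.f ≫ h.f, g.φ ≫ h.φ, by
      rw [F.map_comp, Category.assoc, ← h.w₁, ← Category.assoc, g.w₁, Category.assoc], by
      rw [Category.assoc, h.w₂, ← Category.assoc, g.w₂, Category.assoc, ← G.map_comp]⟩
  id_comp f := by apply MVHom.ext <;> simp
  comp_id f := by apply MVHom.ext <;> simp
  assoc f g h := by apply MVHom.ext <;> simp

@[simp] lemma mv_id_f (o : MVObj F G ξ) : (𝟙 o : MVHom F G ξ o o).f = 𝟙 o.pt := rfl
@[simp] lemma mv_id_φ (o : MVObj F G ξ) : (𝟙 o : MVHom F G ξ o o).φ = 𝟙 o.vec := rfl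
@[simp] lemma mv_comp_f {o₁ o₂ o₃ : MVObj F G ξ} (g : o₁ ⟶ o₂) (h : o₂ ⟶ o₃) :
    (g ≫ h).f = g.f ≫ h.f := rfl
@[simp] lemma mv_comp_φ {o₁ o₂ o₃ : MVObj F G ξ} (g : o₁ ⟶ o₂) (h : o₂ ⟶ o₃) :
    (g ≫ h).φ = g.φ ≫ h.φ := rfl

/-- The canonical functor `i_* : A' → A(ξ)`, `V ↦ (0, V, 0, 0)`. -/
noncomputable def mvILower (hz : IsZero (F.obj (0 : A''))) : A' ⥤ MVObj F G ξ where
  obj V :=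
    { pt := 0
      vec := V
      α := 0
      β := 0
      w := by rw [zero_comp]; exact (hz.eq_of_src 0 (ξ.app 0)) }
  map {V W} φ :=
    { f := 𝟙 0
      φ := φ
      w₁ := by simp
      w₂ := by simp }
  map_id V := by apply MVHom.ext <;> simp
  map_comp f g := by apply MVHom.ext <;> simp

/-- The canonical functor `j^* : A(ξ) → A''`, `(X, V, α, β) ↦ X`. -/
def mvJStar : MVObj F G ξ ⥤ A'' where
  obj o := o.pt
  map m := m.f
  map_id _ := rfl
  map_comp _ _ := rfl

/-- The canonical exact retraction `r : A(ξ) → A'`, `(X, V, α, β) ↦ V`. -/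
def mvVec : MVObj F G ξ ⥤ A' where
  obj o := o.vec
  map m := m.φ
  map_id _ := rfl
  map_comp _ _ := rfl

end MacPhersonVilonen

namespace PreHered

open CategoryTheory.Abelian CategoryTheory.Abelian.Pseudoelement

attribute [local instance] Pseudoelement.homToFun Pseudoelement.setoid

section RecollementLemmas

variable {A' : Type u'} {A : Type u} {A'' : Type u''}
    [Category.{v'} A'] [Category.{v} A] [Category.{v''} A'']
    [Abelian A'] [Abelian A] [Abelian A'']
    (R : Recollement A' A A'')

lemma isZero_tgt_of_epi_of_eq_zero {X Y : A} (f : X ⟶ Y) [Epi f] (hf : f = 0) : IsZero Y := by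
  rw [IsZero.iff_id_eq_zero]
  apply (cancel_epi f).1
  simp [hf]

lemma isZero_jStar_iLower (W : A') : IsZero (R.jStar.obj (R.iLower.obj W)) :=
  (R.essImage_iLower _).1 ⟨W, ⟨Iso.refl _⟩⟩

lemma hom_jShriek_iLower_eq_zero {X : A''} {W : A'}
    (u : R.jShriek.obj X ⟶ R.iLower.obj W) : u = 0 := by
  have h0 : (R.adj₁.homEquiv X (R.iLower.obj W)) u = 0 :=
    (isZero_jStar_iLower R W).eq_of_tgt _ _
  have := (R.adj₁.homEquiv X (R.iLower.obj W)).symm_apply_apply u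
  rw [h0] at this
  rw [← this, Adjunction.homEquiv_counit, Functor.map_zero, zero_comp]

lemma isZero_of_iStar_jStar (Z : A) (h1 : IsZero (R.iStar.obj Z))
    (h2 : IsZero (R.jStar.obj Z)) : IsZero Z := by
  obtain ⟨Y, ⟨e⟩⟩ := (R.essImage_iLower Z).2 h2
  have hY : IsZero Y := by
    refine IsZero.of_iso h1 ?_
    exact (asIso (R.adj₃.counit.app Y)).symm ≪≫ R.iStar.mapIso e
  exact IsZero.of_iso (R.iLower.map_isZero hY) e.symm

lemma unit_epi (M : A) : Epi (R.adj₃.unit.app M) := by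
  haveI := R.adj₃.leftAdjoint_preservesColimits
  haveI := R.adj₂.leftAdjoint_preservesColimits
  haveI : IsIso (R.iStar.map (R.adj₃.unit.app M)) := by
    have h := R.adj₃.left_triangle_components M
    refine ⟨⟨R.adj₃.counit.app (R.iStar.obj M), h, ?_⟩⟩
    rw [← cancel_mono (R.adj₃.counit.app (R.iStar.obj M)), Category.assoc, h]
    simp
  apply Preadditive.epi_of_isZero_cokernel
  apply isZero_of_iStar_jStar R
  · refine IsZero.of_iso ?_ (PreservesCokernel.iso R.iStar (R.adj₃.unit.app M))
    haveI : Epi (R.iStar.map (R.adj₃.unit.app M)) := inferInstance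
    exact isZero_tgt_of_epi_of_eq_zero (cokernel.π _) (cokernel.π_of_epi _)
  · refine IsZero.of_iso ?_ (PreservesCokernel.iso R.jStar (R.adj₃.unit.app M))
    have hz : IsZero (R.jStar.obj (R.iLower.obj (R.iStar.obj M))) := isZero_jStar_iLower R _
    exact isZero_tgt_of_epi_of_eq_zero (cokernel.π _) (hz.eq_of_src _ _)

lemma counit_unit_zero (M : A) : R.adj₁.counit.app M ≫ R.adj₃.unit.app M = 0 :=
  hom_jShriek_iLower_eq_zero R _

lemma counit_unit_exact (M : A) :
    (ShortComplex.mk (R.adj₁.counit.app M) (R.adj₃.unit.app M) (counit_unit_zero R M)).Exact := by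
  haveI := R.adj₂.leftAdjoint_preservesColimits
  -- the cokernel of the counit lies in the essential image of `iLower`
  haveI hsplit : Epi (R.jStar.map (R.adj₁.counit.app M)) := by
    have h := R.adj₁.right_triangle_components M
    haveI : Epi (𝟙 (R.jStar.obj M)) := inferInstance
    exact epi_of_epi_fac h
  have hzc : IsZero (R.jStar.obj (cokernel (R.adj₁.counit.app M))) := by
    refine IsZero.of_iso ?_ (PreservesCokernel.iso R.jStar (R.adj₁.counit.app M))
    exact isZero_tgt_of_epi_of_eq_zero (cokernel.π _) (cokernel.π_of_epi _)
  obtain ⟨Y1, ⟨e1⟩⟩ := (R.essImage_iLower _).2 hzc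
  set u : M ⟶ R.iLower.obj Y1 := cokernel.π (R.adj₁.counit.app M) ≫ e1.inv with hu
  set v : R.iStar.obj M ⟶ Y1 := (R.adj₃.homEquiv M Y1).symm u with hv
  have huv : u = R.adj₃.unit.app M ≫ R.iLower.map v := by
    have := (R.adj₃.homEquiv M Y1).apply_symm_apply u
    rw [← this, Adjunction.homEquiv_unit]
  have hq : cokernel.π (R.adj₁.counit.app M) =
      (R.adj₃.unit.app M ≫ R.iLower.map v) ≫ e1.hom := by
    rw [← huv, hu, Category.assoc, e1.inv_hom_id, Category.comp_id]
  apply Pseudoelement.exact_of_pseudo_exact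
  intro x hx
  have hqx : Pseudoelement.pseudoApply (cokernel.π (R.adj₁.counit.app M)) x = 0 := by
    rw [hq, Pseudoelement.comp_apply, Pseudoelement.comp_apply, hx,
      Pseudoelement.apply_zero, Pseudoelement.apply_zero]
  have hS' : (ShortComplex.mk (R.adj₁.counit.app M) (cokernel.π (R.adj₁.counit.app M))
      (cokernel.condition _)).Exact :=
    ShortComplex.exact_of_g_is_cokernel _ (cokernelIsCokernel _)
  exact Pseudoelement.pseudo_exact_of_exact hS' x hqx

/-- Lemma D: `L₁ i^*` vanishes on the image of `i_*`. -/
lemma isZero_leftDerived_one_iLower [EnoughProjectives A] (W : A') :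
    IsZero ((R.iStar.leftDerived 1).obj (R.iLower.obj W)) := by
  haveI := R.adj₃.leftAdjoint_preservesColimits
  set P := Projective.over (R.iLower.obj W) with hP
  set ρ := Projective.π (R.iLower.obj W) with hρ
  refine (isZero_leftDerived_one_iff_mono R.iStar ρ).2 ?_
  set N := kernel ρ with hN
  set ι := kernel.ι ρ with hι
  -- it suffices to show that `i_* i^*` preserves the mono `ι`
  suffices h : Mono (R.iLower.map (R.iStar.map ι)) by
    exact R.iLower.mono_of_mono_map h
  -- the factorization of the counit through `N`
  have hγ0 : R.adj₁.counit.app P ≫ ρ = 0 := hom_jShriek_iLower_eq_zero R _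
  set γ : R.jShriek.obj (R.jStar.obj P) ⟶ N := kernel.lift ρ (R.adj₁.counit.app P) hγ0 with hγ
  have hγι : γ ≫ ι = R.adj₁.counit.app P := kernel.lift_ι _ _ _
  have hnat : ι ≫ R.adj₃.unit.app P =
      R.adj₃.unit.app N ≫ R.iLower.map (R.iStar.map ι) := by
    have := R.adj₃.unit.naturality ι
    exact this
  haveI hηN : Epi (R.adj₃.unit.app N) := unit_epi R N
  have hγη : γ ≫ R.adj₃.unit.app N = 0 := hom_jShriek_iLower_eq_zero R _
  apply Pseudoelement.mono_of_zero_of_map_zero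
  intro a ha
  obtain ⟨n, hn⟩ := Pseudoelement.pseudo_surjective_of_epi (R.adj₃.unit.app N) a
  have hηp : Pseudoelement.pseudoApply (R.adj₃.unit.app P)
      (Pseudoelement.pseudoApply ι n) = 0 := by
    rw [← Pseudoelement.comp_apply, hnat, Pseudoelement.comp_apply, hn, ha]
  obtain ⟨t, ht⟩ := Pseudoelement.pseudo_exact_of_exact (counit_unit_exact R P) _ hηp
  have hγt : Pseudoelement.pseudoApply γ t = n := by
    apply Pseudoelement.pseudo_injective_of_mono ι
    rw [← Pseudoelement.comp_apply, hγι, ht]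
  rw [← hn, ← hγt, ← Pseudoelement.comp_apply, hγη, Pseudoelement.zero_apply]

/-- Part 2, core argument. -/
lemma part2aux [EnoughProjectives A]
    (hyp : ∀ (V : A'), Projective V →
      IsZero ((R.iStar.leftDerived 2).obj (R.iLower.obj V)))
    (W : A') {P : A} [Projective P] (ρ : P ⟶ R.iLower.obj W) [Epi ρ] :
    IsZero ((R.iStar.leftDerived 2).obj (R.iLower.obj W)) := by
  haveI := R.adj₃.leftAdjoint_preservesColimits
  haveI := R.adj₃.rightAdjoint_preservesLimits
  haveI := R.adj₄.leftAdjoint_preservesColimits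
  refine (isZero_leftDerived_succ_iff R.iStar ρ 0).2 ?_
  set η := R.adj₃.unit.app P with hη
  haveI hηepi : Epi η := unit_epi R P
  haveI : Projective ((𝟭 A).obj P) := (inferInstance : Projective P)
  -- `i^* P` is projective in `A'`
  haveI : R.iLower.PreservesEpimorphisms := by
    haveI := R.adj₄.leftAdjoint_preservesColimits
    infer_instance
  have hproj : Projective (R.iStar.obj P) :=
    R.adj₃.map_projective P inferInstance
  -- vanishing on the first kernel
  have hM₁ : IsZero ((R.iStar.leftDerived 1).obj (kernel η)) :=
    (isZero_leftDerived_succ_iff R.iStar η 0).1 (hyp _ hproj)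
  -- the adjoint of ρ and its kernel
  set πhat : R.iStar.obj P ⟶ W := (R.adj₃.homEquiv P W).symm ρ with hπhat
  have hfact : ρ = η ≫ R.iLower.map πhat := by
    have := (R.adj₃.homEquiv P W).apply_symm_apply ρ
    conv_lhs => rw [← this]
    rw [Adjunction.homEquiv_unit]
  -- the short exact sequence kernel η ⟶ kernel ρ ⟶ kernel (i_* πhat)
  have hjm0 : kernel.ι η ≫ ρ = 0 := by
    rw [hfact, ← Category.assoc, kernel.condition, zero_comp]
  set jm : kernel η ⟶ kernel ρ := kernel.lift ρ (kernel.ι η) hjm0 with hjm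
  have hjmι : jm ≫ kernel.ι ρ = kernel.ι η := kernel.lift_ι _ _ _
  haveI : Mono jm := by
    have : Mono (jm ≫ kernel.ι ρ) := by rw [hjmι]; infer_instance
    exact mono_of_mono jm (kernel.ι ρ)
  have hkm0 : (kernel.ι ρ ≫ η) ≫ R.iLower.map πhat = 0 := by
    rw [Category.assoc, ← hfact, kernel.condition]
  set km : kernel ρ ⟶ kernel (R.iLower.map πhat) := kernel.lift _ (kernel.ι ρ ≫ η) hkm0 with hkm
  have hkmι : km ≫ kernel.ι (R.iLower.map πhat) = kernel.ι ρ ≫ η := kernel.lift_ι _ _ _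
  haveI hkmepi : Epi km := by
    apply Pseudoelement.epi_of_pseudo_surjective
    intro c
    obtain ⟨p, hp⟩ := Pseudoelement.pseudo_surjective_of_epi η
      (Pseudoelement.pseudoApply (kernel.ι (R.iLower.map πhat)) c)
    have hρp : Pseudoelement.pseudoApply ρ p = 0 := by
      rw [hfact, Pseudoelement.comp_apply, hp, ← Pseudoelement.comp_apply,
        kernel.condition, Pseudoelement.zero_apply]
    obtain ⟨n, hnp⟩ := Pseudoelement.pseudo_exact_of_exact (exact_kernel_ι ρ) p hρp
    refine ⟨n, Pseudoelement.pseudo_injective_of_mono (kernel.ι (R.iLower.map πhat)) ?_⟩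
    rw [← Pseudoelement.comp_apply, hkmι, Pseudoelement.comp_apply, hnp, hp]
  have hjk : jm ≫ km = 0 := by
    rw [← cancel_mono (kernel.ι (R.iLower.map πhat)), Category.assoc, hkmι, zero_comp,
      ← Category.assoc, hjmι, kernel.condition]
  have hexact : (ShortComplex.mk jm km hjk).Exact := by
    apply Pseudoelement.exact_of_pseudo_exact
    intro n hn
    have h1 : Pseudoelement.pseudoApply η (Pseudoelement.pseudoApply (kernel.ι ρ) n) = 0 := by
      rw [← Pseudoelement.comp_apply, ← hkmι, Pseudoelement.comp_apply, hn,
        Pseudoelement.apply_zero]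
    obtain ⟨m, hm⟩ := Pseudoelement.pseudo_exact_of_exact (exact_kernel_ι η) _ h1
    refine ⟨m, Pseudoelement.pseudo_injective_of_mono (kernel.ι ρ) ?_⟩
    rw [← Pseudoelement.comp_apply, hjmι, hm]
  -- vanishing on kernel (i_* πhat)
  have hKA0 : IsZero ((R.iStar.leftDerived 1).obj (kernel (R.iLower.map πhat))) := by
    have hD := isZero_leftDerived_one_iLower R (kernel πhat)
    refine IsZero.of_iso hD ((R.iStar.leftDerived 1).mapIso ?_)
    exact (PreservesKernel.iso R.iLower πhat).symm
  exact isZero_leftDerived_one_of_shortExact R.iStar jm km hjk hexact hM₁ hKA0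

/-- Part 2: a pre-hereditary recollement has `(L₂ i^*) ∘ i_* = 0`. -/
lemma part2 [EnoughProjectives A]
    (hyp : ∀ (V : A'), Projective V →
      IsZero ((R.iStar.leftDerived 2).obj (R.iLower.obj V))) (W : A') :
    IsZero ((R.iStar.leftDerived 2).obj (R.iLower.obj W)) :=
  part2aux R hyp W (Projective.π (R.iLower.obj W))

end RecollementLemmas

end PreHered


namespace PreHered

open CategoryTheory.Abelian CategoryTheory.Abelian.Pseudoelement

attribute [local instance] Pseudoelement.homToFun Pseudoelement.setoid

section MVTools

variable {A' : Type u'} {A'' : Type u''}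
    [Category.{v'} A'] [Category.{v''} A''] [Abelian A'] [Abelian A'']
    (F G : A'' ⥤ A') (ξ : F ⟶ G)
    [Abelian (MVObj F G ξ)]
    [PreservesFiniteLimits (mvVec F G ξ)] [PreservesFiniteColimits (mvVec F G ξ)]
    [PreservesFiniteLimits (mvJStar F G ξ)] [PreservesFiniteColimits (mvJStar F G ξ)]

instance mvJStar_pzm : (mvJStar F G ξ).PreservesZeroMorphisms :=
  Functor.preservesZeroMorphisms_of_map_zero_object
    ((isZero_obj_zero_of_preservesFiniteLimits (mvJStar F G ξ)).isoZero)

instance mvVec_pzm : (mvVec F G ξ).PreservesZeroMorphisms :=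
  Functor.preservesZeroMorphisms_of_map_zero_object
    ((isZero_obj_zero_of_preservesFiniteLimits (mvVec F G ξ)).isoZero)

instance mvJStar_additive : (mvJStar F G ξ).Additive :=
  Functor.additive_of_preserves_binary_products _

instance mvVec_additive : (mvVec F G ξ).Additive :=
  Functor.additive_of_preserves_binary_products _

lemma mv_isZero (Z : MVObj F G ξ) (h1 : IsZero Z.pt) (h2 : IsZero Z.vec) : IsZero Z := by
  rw [IsZero.iff_id_eq_zero]
  apply MVHom.ext
  · exact h1.eq_of_src _ _
  · exact h2.eq_of_src _ _

lemma mv_epi_of_components {M N : MVObj F G ξ} (h : M ⟶ N) (h1 : Epi h.f) (h2 : Epi h.φ) :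
    Epi h := by
  apply Preadditive.epi_of_isZero_cokernel
  apply mv_isZero
  · refine IsZero.of_iso ?_ (PreservesCokernel.iso (mvJStar F G ξ) h)
    haveI : Epi ((mvJStar F G ξ).map h) := h1
    exact isZero_cokernel_of_epi' _
  · refine IsZero.of_iso ?_ (PreservesCokernel.iso (mvVec F G ξ) h)
    haveI : Epi ((mvVec F G ξ).map h) := h2
    exact isZero_cokernel_of_epi' _

/-- The canonical "free prolongation" object `T(M) = (j^*M, F(j^*M) ⊕ rM, inl, (ξ, β))`. -/
@[simps]
noncomputable def mvT (M : MVObj F G ξ) : MVObj F G ξ where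
  pt := M.pt
  vec := F.obj M.pt ⊞ M.vec
  α := biprod.inl
  β := biprod.desc (ξ.app M.pt) M.β
  w := by simp

attribute [reducible] mvT

/-- The canonical epimorphism `T(M) ⟶ M`. -/
@[simps]
noncomputable def mvτ (M : MVObj F G ξ) : mvT F G ξ M ⟶ M where
  f := 𝟙 M.pt
  φ := biprod.desc M.α (𝟙 M.vec)
  w₁ := by simp
  w₂ := by
    apply biprod.hom_ext' <;> simp [M.w]

lemma mvτ_epi (M : MVObj F G ξ) : Epi (mvτ F G ξ M) := by
  apply mv_epi_of_components
  · show Epi (𝟙 M.pt); infer_instance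
  · show Epi (biprod.desc M.α (𝟙 M.vec))
    have h : biprod.inr ≫ biprod.desc M.α (𝟙 M.vec) = 𝟙 M.vec := biprod.inr_desc _ _
    exact epi_of_epi_fac h

/-- `α` of a projective object in `A(ξ)` is a split monomorphism. -/
lemma mv_alpha_mono (P : MVObj F G ξ) [Projective P] : Mono P.α := by
  haveI := mvτ_epi F G ξ P
  set σ : P ⟶ mvT F G ξ P := Projective.factorThru (𝟙 P) (mvτ F G ξ P) with hσdef
  have hσ : σ ≫ mvτ F G ξ P = 𝟙 P := Projective.factorThru_comp _ _
  have hσf : σ.f = 𝟙 P.pt := by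
    have := congrArg MVHom.f hσ
    simpa using this
  have hw := σ.w₁
  rw [hσf, CategoryTheory.Functor.map_id, Category.id_comp] at hw
  -- hw : P.α ≫ σ.φ = biprod.inl
  have hret : P.α ≫ (σ.φ ≫ biprod.fst) = 𝟙 _ := by
    rw [← Category.assoc, hw]
    simp
  haveI : Mono (P.α ≫ (σ.φ ≫ biprod.fst)) := by rw [hret]; infer_instance
  exact mono_of_mono P.α (σ.φ ≫ biprod.fst)

lemma mv_epi_jStar_kernelι {M N : MVObj F G ξ} (g : M ⟶ N)
    (hN : IsZero ((mvJStar F G ξ).obj N)) :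
    Epi ((mvJStar F G ξ).map (kernel.ι g)) := by
  haveI : (mvJStar F G ξ).PreservesHomology :=
    Functor.preservesHomology_of_preservesEpis_and_kernels _
  have hex : ((ShortComplex.mk (kernel.ι g) g (kernel.condition g)).map
      (mvJStar F G ξ)).Exact := (exact_kernel_ι g).map _
  have hg0 : (mvJStar F G ξ).map g = 0 := hN.eq_of_tgt _ _
  apply Pseudoelement.epi_of_pseudo_surjective
  intro b
  have hb : Pseudoelement.pseudoApply ((mvJStar F G ξ).map g) b = 0 := by
    rw [hg0, Pseudoelement.zero_apply]
  exact Pseudoelement.pseudo_exact_of_exact hex b hb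

lemma mv_alpha_kernel_mono {M N : MVObj F G ξ} (g : M ⟶ N) (hα : Mono M.α)
    (hN : IsZero ((mvJStar F G ξ).obj N)) :
    Mono (kernel g : MVObj F G ξ).α := by
  set ι := kernel.ι g with hι
  have hw := ι.w₁
  -- hw : (kernel g).α ≫ ι.φ = F.map ι.f ≫ M.α
  haveI hmφ : Mono ι.φ := by
    show Mono ((mvVec F G ξ).map (kernel.ι g))
    infer_instance
  haveI hif : IsIso ι.f := by
    haveI h1 : Mono ι.f := (inferInstance : Mono ((mvJStar F G ξ).map (kernel.ι g)))
    haveI h2 : Epi ι.f := mv_epi_jStar_kernelι F G ξ g hN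
    exact isIso_of_mono_of_epi _
  haveI : IsIso (F.map ι.f) := inferInstance
  haveI : Mono (F.map ι.f ≫ M.α) := mono_comp _ _
  haveI : Mono ((kernel g : MVObj F G ξ).α ≫ ι.φ) := by rw [hw]; infer_instance
  exact mono_of_mono (kernel g : MVObj F G ξ).α ι.φ

/-- The explicit cokernel functor `M ↦ coker (α_M)`, naturally isomorphic to `i^*`. -/
@[simps]
noncomputable def mvQ : MVObj F G ξ ⥤ A' where
  obj M := cokernel M.α
  map {M N} h := cokernel.desc M.α (h.φ ≫ cokernel.π N.α) (by
    rw [← Category.assoc, h.w₁, Category.assoc, cokernel.condition, comp_zero])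
  map_id M := by
    apply coequalizer.hom_ext
    simp
  map_comp {M N O} g h := by
    apply coequalizer.hom_ext
    simp

attribute [reducible] mvQ

instance mvQ_additive : (mvQ F G ξ).Additive where
  map_add {M N f g} := by
    apply coequalizer.hom_ext
    have hφ : (f + g).φ = f.φ + g.φ := (mvVec F G ξ).map_add
    simp [hφ, Preadditive.add_comp, Preadditive.comp_add]

variable (hz : IsZero (F.obj (0 : A''))) (hG0 : IsZero (G.obj (0 : A'')))

/-- The adjunction `mvQ ⊣ mvILower`. -/
noncomputable def mvAdj : mvQ F G ξ ⊣ mvILower F G ξ hz :=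
  Adjunction.mkOfHomEquiv
  { homEquiv := fun M V =>
      { toFun := fun u =>
          { f := 0
            φ := cokernel.π M.α ≫ u
            w₁ := by
              show M.α ≫ cokernel.π M.α ≫ u = F.map _ ≫ (0 : F.obj (0 : A'') ⟶ V)
              rw [← Category.assoc, cokernel.condition, zero_comp, comp_zero]
            w₂ := hG0.eq_of_tgt _ _ }
        invFun := fun h => cokernel.desc M.α h.φ (by
          have := h.w₁
          refine this.trans ?_
          show F.map h.f ≫ (0 : F.obj (0 : A'') ⟶ V) = 0
          exact comp_zero)
        left_inv := fun u => by
          apply coequalizer.hom_ext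
          exact cokernel.π_desc _ _ _
        right_inv := fun h => by
          apply MVHom.ext
          · exact (isZero_zero A'').eq_of_tgt _ _
          · exact cokernel.π_desc _ _ _ }
    homEquiv_naturality_left_symm := fun {M' M V} g h => by
      apply coequalizer.hom_ext
      have hφ : (g ≫ h).φ = g.φ ≫ h.φ := rfl
      simp [hφ]
      refine Eq.trans (cokernel.π_desc _ _ _) ?_
      erw [cokernel.π_desc]
      rfl
    homEquiv_naturality_right := fun {M V V'} h g => by
      apply MVHom.ext
      · exact (isZero_zero A'').eq_of_tgt _ _
      · show cokernel.π M.α ≫ h ≫ g = (cokernel.π M.α ≫ h) ≫ g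
        rw [Category.assoc] }

/-- The crux: `mvQ` preserves the monomorphism `kernel (Projective.π M) ⟶ P` whenever
`α_M` is mono. -/
lemma mv_mono_mvQ_kernel [EnoughProjectives (MVObj F G ξ)] [PreservesFiniteColimits F]
    [F.PreservesZeroMorphisms]
    (M : MVObj F G ξ) (hα : Mono M.α) :
    Mono ((mvQ F G ξ).map (kernel.ι (Projective.π M))) := by
  set ρ := Projective.π M with hρ
  set ι₂ := kernel.ι ρ with hι₂
  -- exactness of F (j^* kernel) → F (j^* P) → F (j^* M)
  haveI : (mvJStar F G ξ).PreservesHomology :=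
    Functor.preservesHomology_of_preservesEpis_and_kernels _
  have hexA'' : ((ShortComplex.mk ι₂ ρ (kernel.condition ρ)).map (mvJStar F G ξ)).Exact :=
    (exact_kernel_ι ρ).map _
  haveI hepiρf : Epi ((mvJStar F G ξ).map ρ) := inferInstance
  have hexF : (((ShortComplex.mk ι₂ ρ (kernel.condition ρ)).map (mvJStar F G ξ)).map F).Exact :=
    map_exact_of_epi F _ hexA'' hepiρf
  have hepiFρf : Epi (F.map ρ.f) := map_epi F _ hepiρf
  -- exactness of cokernel presentations
  have hex1 : (ShortComplex.mk (Projective.over M : MVObj F G ξ).α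
      (cokernel.π (Projective.over M : MVObj F G ξ).α) (cokernel.condition _)).Exact :=
    ShortComplex.exact_of_g_is_cokernel _ (cokernelIsCokernel _)
  haveI hmφ : Mono ι₂.φ := by
    show Mono ((mvVec F G ξ).map (kernel.ι ρ))
    infer_instance
  have hρφ : ι₂.φ ≫ ρ.φ = 0 := by
    have : ι₂ ≫ ρ = 0 := kernel.condition ρ
    exact (congrArg MVHom.φ this).trans ((mvVec F G ξ).map_zero _ _)
  -- the pseudoelement chase
  apply Pseudoelement.mono_of_zero_of_map_zero
  intro x hx
  obtain ⟨w, hw⟩ := Pseudoelement.pseudo_surjective_of_epi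
    (cokernel.π (kernel ρ : MVObj F G ξ).α) x
  have hb : Pseudoelement.pseudoApply (cokernel.π (Projective.over M : MVObj F G ξ).α)
      (Pseudoelement.pseudoApply ι₂.φ w) = 0 := by
    have hcomm : ι₂.φ ≫ cokernel.π (Projective.over M : MVObj F G ξ).α =
        cokernel.π (kernel ρ : MVObj F G ξ).α ≫ (mvQ F G ξ).map ι₂ :=
      (cokernel.π_desc _ _ _).symm
    rw [← Pseudoelement.comp_apply, hcomm, Pseudoelement.comp_apply, hw, hx]
  obtain ⟨t, ht⟩ := Pseudoelement.pseudo_exact_of_exact hex1 _ hb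
  have h2 : Pseudoelement.pseudoApply M.α
      (Pseudoelement.pseudoApply (F.map ρ.f) t) = 0 := by
    have hw1 := ρ.w₁
    rw [← Pseudoelement.comp_apply, ← hw1, Pseudoelement.comp_apply, ht,
      ← Pseudoelement.comp_apply, hρφ, Pseudoelement.zero_apply]
  have h3 : Pseudoelement.pseudoApply (F.map ρ.f) t = 0 :=
    Pseudoelement.zero_of_map_zero _ (Pseudoelement.pseudo_injective_of_mono M.α) _ h2
  obtain ⟨s, hs⟩ : ∃ s : Pseudoelement (F.obj (kernel ρ : MVObj F G ξ).pt),
      Pseudoelement.pseudoApply (F.map ι₂.f) s = t := Pseudoelement.pseudo_exact_of_exact hexF t h3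
  have hs' : Pseudoelement.pseudoApply (F.map ι₂.f) s = t := hs
  have h4 : Pseudoelement.pseudoApply ι₂.φ
      (Pseudoelement.pseudoApply (kernel ρ : MVObj F G ξ).α s) =
      Pseudoelement.pseudoApply ι₂.φ w := by
    have hw1 := ι₂.w₁
    rw [← Pseudoelement.comp_apply, hw1, Pseudoelement.comp_apply, hs', ht]
  have h5 : Pseudoelement.pseudoApply (kernel ρ : MVObj F G ξ).α s = w :=
    Pseudoelement.pseudo_injective_of_mono ι₂.φ h4
  rw [← hw, ← h5, ← Pseudoelement.comp_apply, cokernel.condition, Pseudoelement.zero_apply]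

include hG0 in
/-- Part 1, core: `L₂ mvQ` vanishes on `mvILower V`. -/
lemma part1core [EnoughProjectives (MVObj F G ξ)] [PreservesFiniteColimits F]
    [F.PreservesZeroMorphisms] (V : A') :
    IsZero (((mvQ F G ξ).leftDerived 2).obj ((mvILower F G ξ hz).obj V)) := by
  haveI := (mvAdj F G ξ hz hG0).leftAdjoint_preservesColimits
  set ρ₀ := Projective.π ((mvILower F G ξ hz).obj V) with hρ₀
  refine (isZero_leftDerived_succ_iff (mvQ F G ξ) ρ₀ 0).2 ?_
  refine (isZero_leftDerived_one_iff_mono (mvQ F G ξ) (Projective.π (kernel ρ₀))).2 ?_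
  apply mv_mono_mvQ_kernel
  refine mv_alpha_kernel_mono F G ξ ρ₀ (mv_alpha_mono F G ξ _) ?_
  exact (isZero_zero A'')

end MVTools

end PreHered


/-- Every MacPherson–Vilonen recollement with enough projectives is pre-hereditary,
i.e. `(L₂ i^*)(i_* V) = 0` for every projective `V` of `A'`; consequently
`(L₂ i^*) ∘ i_* = 0` in any pre-hereditary recollement. -/
theorem mv_recollement_preHereditary :
    (∀ (F G : A'' ⥤ A') (ξ : F ⟶ G),
      PreservesFiniteColimits F → PreservesFiniteLimits G →
      ∀ (hz : IsZero (F.obj (0 : A''))),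
      ∀ [Abelian (MVObj F G ξ)] [EnoughProjectives (MVObj F G ξ)]
        [PreservesFiniteLimits (mvVec F G ξ)] [PreservesFiniteColimits (mvVec F G ξ)]
        [PreservesFiniteLimits (mvJStar F G ξ)] [PreservesFiniteColimits (mvJStar F G ξ)],
      ∀ (S : Recollement A' (MVObj F G ξ) A''),
        S.iLower = mvILower F G ξ hz → S.jStar = mvJStar F G ξ →
        ∀ (V : A'), Projective V →
          IsZero ((S.iStar.leftDerived 2).obj (S.iLower.obj V))) ∧
    (∀ (R : Recollement A' A A'') [EnoughProjectives A],
      (∀ (V : A'), Projective V →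
        IsZero ((R.iStar.leftDerived 2).obj (R.iLower.obj V))) →
      ∀ W : A', IsZero ((R.iStar.leftDerived 2).obj (R.iLower.obj W))) := by
  constructor
  · intro F G ξ hF hG hz iA iE i1 i2 i3 i4 S hil hjs V hV
    haveI := hF
    haveI := hG
    haveI : F.PreservesZeroMorphisms :=
      Functor.preservesZeroMorphisms_of_map_zero_object hz.isoZero
    have hG0 : IsZero (G.obj (0 : A'')) :=
      PreHered.isZero_obj_zero_of_preservesFiniteLimits G
    have e : S.iStar ≅ PreHered.mvQ F G ξ :=
      Adjunction.leftAdjointUniq (hil ▸ S.adj₃) (PreHered.mvAdj F G ξ hz hG0)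
    have e2 := PreHered.leftDerivedMapIso e 2
    rw [hil]
    exact IsZero.of_iso (PreHered.part1core F G ξ hz hG0 V) (e2.app _)
  · intro R iEP hyp W
    haveI := iEP
    exact PreHered.part2 R hyp W
end
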